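/- arXiv:2209.02844 — 5 statements merged into one kernel-verified Lean document; each statement's English description precedes it below -/
import Mathlib

section
/- Suppose the distribution μ has finite mean m = E[S_1] = Σ_{s=1}^{∞} s·μ_s < ∞ and that the greatest common divisor of the support {s ≥ 1 : μ_s > 0} equals 1. Then lim_{n→∞} P[E_n] = 1/m. -/
open MeasureTheory ProbabilityTheory Filter Topology ENNReal


lemma gcd_closure_cofinite (S : Set ℕ)
    (h1 : ∀ d : ℕ, (∀ s ∈ S, d ∣ s) → d = 1) :
    ∃ N : ℕ, ∀ n ≥ N, n ∈ AddSubmonoid.closure S := by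
  set M := AddSubmonoid.closure S with hM
  have hmem : ∀ s ∈ S, s ∈ M := fun s hs => AddSubmonoid.subset_closure hs
  -- there is a positive element of S
  have hpos : ∃ s ∈ S, 0 < s := by
    by_contra h
    push_neg at h
    have : (2 : ℕ) = 1 := h1 2 (fun s hs => by
      have := h s hs
      interval_cases s
      · exact Dvd.intro 0 rfl)
    omega
  obtain ⟨s₀, hs₀S, hs₀⟩ := hpos
  -- least positive difference of two elements of M
  have hQ : ∃ k : ℕ, 0 < k ∧ ∃ a ∈ M, ∃ b ∈ M, a = b + k :=
    ⟨s₀, hs₀, s₀, hmem _ hs₀S, 0, zero_mem M, (zero_add s₀).symm⟩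
  classical
  set d := Nat.find hQ with hd
  obtain ⟨hdpos, a, haM, b, hbM, hab⟩ := Nat.find_spec hQ
  rw [← hd] at hdpos hab
  have hdvd : ∀ s ∈ S, d ∣ s := by
    intro s hsS
    rcases Nat.eq_zero_or_pos (s % d) with hr | hr
    · exact Nat.dvd_of_mod_eq_zero hr
    · exfalso
      have hlt : s % d < d := Nat.mod_lt _ hdpos
      apply Nat.find_min hQ hlt
      refine ⟨hr, s + (s / d) • b, ?_, (s / d) • a, ?_, ?_⟩
      · exact add_mem (hmem s hsS) (nsmul_mem hbM _)
      · exact nsmul_mem haM _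
      · have h2 := Nat.div_add_mod s d
        simp only [smul_eq_mul]
        rw [hab, Nat.mul_add, Nat.mul_comm (s / d) d]
        omega
  have hd1 : d = 1 := h1 d hdvd
  rw [hd1] at hab
  -- now a = b + 1, a b ∈ M
  rcases Nat.eq_zero_or_pos b with hb0 | hbpos
  · subst hb0
    refine ⟨0, fun n _ => ?_⟩
    have : a = 1 := by omega
    have : (1 : ℕ) ∈ M := this ▸ haM
    have := nsmul_mem this n
    simpa using this
  · refine ⟨b * b, fun n hn => ?_⟩
    set q := n / b with hq
    set r := n % b with hr
    have hrb : r < b := Nat.mod_lt _ hbpos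
    have hqb : b ≤ q := by
      rw [hq, Nat.le_div_iff_mul_le hbpos]
      exact hn
    have hnq : n = (q - r) * b + r * a := by
      have h3 : q * b + r = n := by rw [Nat.mul_comm]; exact Nat.div_add_mod n b
      have hqr : r ≤ q := le_of_lt (lt_of_lt_of_le hrb hqb)
      have h5 : r * b ≤ q * b := Nat.mul_le_mul_right _ hqr
      rw [hab, Nat.mul_add, Nat.mul_one, Nat.sub_mul]
      omega
    rw [hnq]
    exact add_mem (by simpa [smul_eq_mul] using nsmul_mem hbM (q - r))
      (by simpa [smul_eq_mul] using nsmul_mem haM r)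


lemma renewal_force (f : ℕ → ℝ) (hf : ∀ s, 0 ≤ f s) (hfs : HasSum f 1)
    (v : ℕ → ℝ) (c : ℝ) (hc1 : |c| ≤ 1)
    (hvc : ∀ t, v t ≤ c)
    (hlin : ∀ t T, |v t - ∑ s ∈ Finset.range (T+1), f s * v (t+s)|
      ≤ 2 * (1 - ∑ s ∈ Finset.range (T+1), f s))
    (t : ℕ) (hvt : v t = c) (s₀ : ℕ) (hs₀ : 0 < f s₀) :
    v (t + s₀) = c := by
  refine le_antisymm (hvc _) ?_
  have hST : ∀ T, ∑ s ∈ Finset.range (T+1), f s ≤ 1 :=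
    fun T => sum_le_hasSum _ (fun i _ => hf i) hfs
  have key : ∀ T, s₀ ≤ T → f s₀ * (c - v (t + s₀)) ≤ 3 * (1 - ∑ s ∈ Finset.range (T+1), f s) := by
    intro T hT
    set ST := ∑ s ∈ Finset.range (T+1), f s with hSTdef
    set A := ∑ s ∈ Finset.range (T+1), f s * v (t+s) with hAdef
    have hmem : s₀ ∈ Finset.range (T+1) := Finset.mem_range.mpr (by omega)
    have hsplit : ∑ s ∈ (Finset.range (T+1)).erase s₀, f s * v (t+s) + f s₀ * v (t + s₀) = A :=
      Finset.sum_erase_add _ _ hmem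
    have hsplit2 : ∑ s ∈ (Finset.range (T+1)).erase s₀, f s + f s₀ = ST :=
      Finset.sum_erase_add _ _ hmem
    have herase : ∑ s ∈ (Finset.range (T+1)).erase s₀, f s * v (t+s)
        ≤ (∑ s ∈ (Finset.range (T+1)).erase s₀, f s) * c := by
      rw [Finset.sum_mul]
      exact Finset.sum_le_sum fun i _ => mul_le_mul_of_nonneg_left (hvc _) (hf i)
    have hEq : (ST - f s₀) * c = (∑ s ∈ (Finset.range (T+1)).erase s₀, f s) * c := by
      rw [← hsplit2]; ring
    have hA : A ≤ (ST - f s₀) * c + f s₀ * v (t + s₀) := by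
      rw [hEq]; linarith [herase, hsplit]
    have habs := (abs_le.mp (hlin t T)).2
    rw [hvt, ← hAdef, ← hSTdef] at habs
    have hc' := abs_le.mp hc1
    have h7 : -(1 - ST) ≤ (1 - ST) * c := by nlinarith [hST T, hc'.1]
    nlinarith [hA, habs, h7]
  -- limit as T → ∞
  have hδto : Tendsto (fun T => 3 * (1 - ∑ s ∈ Finset.range (T+1), f s)) atTop (𝓝 0) := by
    have h1 : Tendsto (fun T : ℕ => ∑ s ∈ Finset.range (T+1), f s) atTop (𝓝 1) :=
      hfs.tendsto_sum_nat.comp (tendsto_add_atTop_nat 1)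
    have := (tendsto_const_nhds (x := (1:ℝ)) (f := atTop)).sub h1
    have := this.const_mul (3 : ℝ)
    simpa using this
  have hle0 : f s₀ * (c - v (t + s₀)) ≤ 0 :=
    ge_of_tendsto hδto (eventually_atTop.mpr ⟨s₀, key⟩)
  nlinarith [hvc (t + s₀), hle0]


lemma mapClusterPt_of_freq (u : ℕ → ℝ) (c : ℝ)
    (h : ∀ ε > (0:ℝ), ∃ᶠ n in atTop, |u n - c| < ε) : MapClusterPt c atTop u := by
  rw [mapClusterPt_iff_frequently]
  intro s hs
  obtain ⟨ε, hε, hball⟩ := Metric.mem_nhds_iff.mp hs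
  exact (h ε hε).mono (fun n hn => hball (by simpa [Metric.mem_ball, Real.dist_eq] using hn))

theorem renewal_seq_tendsto (f u b : ℕ → ℝ) (m : ℝ)
    (hf : ∀ s, 0 ≤ f s) (hfs : HasSum f 1)
    (hu0 : u 0 = 1) (hu : ∀ n, u n ∈ Set.Icc (0:ℝ) 1)
    (hren : ∀ n, 1 ≤ n → u n = ∑ s ∈ Finset.range (n+1), f s * u (n - s))
    (hbnn : ∀ t, 0 ≤ b t) (hbm : HasSum b m)
    (hid : ∀ n, ∑ j ∈ Finset.range (n+1), b j * u (n - j) = 1)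
    (hgcd : ∀ d : ℕ, (∀ s, 0 < f s → d ∣ s) → d = 1) :
    Tendsto u atTop (𝓝 (1/m)) := by
  classical
  have hunn : ∀ n, 0 ≤ u n := fun n => (hu n).1
  have hub : ∀ n, u n ≤ 1 := fun n => (hu n).2
  have hb0 : b 0 = 1 := by have h := hid 0; simpa [hu0] using h
  have hm1 : (1:ℝ) ≤ m := hb0 ▸ le_hasSum hbm 0 (fun i _ => hbnn i)
  have hmpos : (0:ℝ) < m := by linarith
  have hbddle : IsBoundedUnder (· ≤ ·) atTop u := isBoundedUnder_of ⟨1, fun n => hub n⟩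
  have hbddge : IsBoundedUnder (· ≥ ·) atTop u := isBoundedUnder_of ⟨0, fun n => hunn n⟩
  have hcoble : IsCoboundedUnder (· ≤ ·) atTop u := hbddge.isCoboundedUnder_le
  have hcobge : IsCoboundedUnder (· ≥ ·) atTop u := hbddle.isCoboundedUnder_ge
  set lam := limsup u atTop with hlam
  set eta := liminf u atTop with heta
  have heta_le_lam : eta ≤ lam := liminf_le_limsup hbddle hbddge
  have hlam_mem : 0 ≤ lam ∧ lam ≤ 1 := by
    constructor
    · exact le_trans (le_liminf_of_le hcobge (Eventually.of_forall hunn)) heta_le_lam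
    · exact limsup_le_of_le hcoble (Eventually.of_forall hub)
  have heta_mem : 0 ≤ eta ∧ eta ≤ 1 := by
    constructor
    · exact le_liminf_of_le hcobge (Eventually.of_forall hunn)
    · exact le_trans heta_le_lam hlam_mem.2
  -- partial sums of f and b
  have hfpart : ∀ T, ∑ s ∈ Finset.range (T+1), f s ≤ 1 :=
    fun T => sum_le_hasSum _ (fun i _ => hf i) hfs
  have hbpart : ∀ T, ∑ j ∈ Finset.range (T+1), b j ≤ m :=
    fun T => sum_le_hasSum _ (fun i _ => hbnn i) hbm
  have hbtend : Tendsto (fun T : ℕ => ∑ j ∈ Finset.range (T+1), b j) atTop (𝓝 m) :=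
    hbm.tendsto_sum_nat.comp (tendsto_add_atTop_nat 1)
  -- the semigroup bound
  obtain ⟨N, hNmem⟩ := gcd_closure_cofinite {s | 0 < f s}
    (fun d hd => hgcd d (fun s hs => hd s hs))
  -- For each ultrafilter finer than atTop, limits of shifts exist and satisfy the
  -- approximate renewal equation.
  have main : ∀ U : Ultrafilter ℕ, (↑U : Filter ℕ) ≤ atTop →
      ∃ v : ℕ → ℝ, (∀ t, Tendsto (fun n => u (n - t)) ↑U (𝓝 (v t))) ∧
        (∀ t, v t ∈ Set.Icc (0:ℝ) 1) ∧
        (∀ t, eta ≤ v t ∧ v t ≤ lam) ∧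
        (∀ t T, |v t - ∑ s ∈ Finset.range (T+1), f s * v (t+s)|
          ≤ 2 * (1 - ∑ s ∈ Finset.range (T+1), f s)) := by
    intro U hUle
    have hex : ∀ t : ℕ, ∃ x, x ∈ Set.Icc (0:ℝ) 1 ∧
        Tendsto (fun n => u (n - t)) ↑U (𝓝 x) := by
      intro t
      have hle : (U.map (fun n => u (n - t)) : Filter ℝ) ≤ 𝓟 (Set.Icc 0 1) := by
        rw [le_principal_iff]
        exact Filter.mem_map.mpr (Filter.univ_mem' (fun n => hu (n - t)))
      obtain ⟨x, hx, hconv⟩ := isCompact_Icc.ultrafilter_le_nhds (U.map (fun n => u (n - t))) hle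
      exact ⟨x, hx, hconv⟩
    choose v hvI hvT using hex
    refine ⟨v, hvT, hvI, ?_, ?_⟩
    · intro t
      constructor
      · -- eta ≤ v t
        by_contra hcon
        push_neg at hcon
        obtain ⟨c, hc1, hc2⟩ := exists_between hcon
        have hev : ∀ᶠ k in atTop, c < u k :=
          eventually_lt_of_lt_liminf (by rw [← heta]; exact hc2) hbddge
        have hev2 : ∀ᶠ n in atTop, c < u (n - t) := (tendsto_sub_atTop_nat t).eventually hev
        have : c ≤ v t := ge_of_tendsto (hvT t) ((hev2.filter_mono hUle).mono fun n h => le_of_lt h)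
        linarith
      · by_contra hcon
        push_neg at hcon
        obtain ⟨c, hc1, hc2⟩ := exists_between hcon
        have hev : ∀ᶠ k in atTop, u k < c :=
          eventually_lt_of_limsup_lt (by rw [← hlam]; exact hc1) hbddle
        have hev2 : ∀ᶠ n in atTop, u (n - t) < c := (tendsto_sub_atTop_nat t).eventually hev
        have : v t ≤ c := le_of_tendsto (hvT t) ((hev2.filter_mono hUle).mono fun n h => le_of_lt h)
        linarith
    · intro t T
      -- pointwise double inequality
      have hpt : ∀ n, t + T + 1 ≤ n →
          u (n - t) - ∑ s ∈ Finset.range (T+1), f s * u (n - (t+s)) ∈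
            Set.Icc (0:ℝ) (1 - ∑ s ∈ Finset.range (T+1), f s) := by
        intro n hn
        have h1 : 1 ≤ n - t := by omega
        have heq := hren (n - t) h1
        have hrw : ∀ s : ℕ, (n - t) - s = n - (t + s) := fun s => by omega
        have heq' : u (n - t) = ∑ s ∈ Finset.range ((n-t)+1), f s * u (n - (t+s)) := by
          rw [heq]; exact Finset.sum_congr rfl (fun s _ => by rw [hrw s])
        have hsub : Finset.range (T+1) ⊆ Finset.range ((n-t)+1) :=
          Finset.range_subset_range.mpr (by omega)
        have hdiff : ∑ s ∈ Finset.range ((n-t)+1) \ Finset.range (T+1), f s * u (n - (t+s))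
            = u (n - t) - ∑ s ∈ Finset.range (T+1), f s * u (n - (t+s)) := by
          rw [Finset.sum_sdiff_eq_sub hsub, ← heq']
        constructor
        · rw [← hdiff]
          exact Finset.sum_nonneg fun s _ => mul_nonneg (hf s) (hunn _)
        · rw [← hdiff]
          calc ∑ s ∈ Finset.range ((n-t)+1) \ Finset.range (T+1), f s * u (n - (t+s))
              ≤ ∑ s ∈ Finset.range ((n-t)+1) \ Finset.range (T+1), f s :=
                Finset.sum_le_sum fun s _ => mul_le_of_le_one_right (hf s) (hub _)
            _ = ∑ s ∈ Finset.range ((n-t)+1), f s - ∑ s ∈ Finset.range (T+1), f s :=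
                Finset.sum_sdiff_eq_sub hsub
            _ ≤ 1 - ∑ s ∈ Finset.range (T+1), f s := by linarith [hfpart (n - t)]
      have htendsto : Tendsto
          (fun n => u (n - t) - ∑ s ∈ Finset.range (T+1), f s * u (n - (t+s))) ↑U
          (𝓝 (v t - ∑ s ∈ Finset.range (T+1), f s * v (t+s))) :=
        (hvT t).sub (tendsto_finset_sum _ (fun s _ => ((hvT (t+s)).const_mul (f s))))
      have hev : ∀ᶠ n in (↑U : Filter ℕ),
          u (n - t) - ∑ s ∈ Finset.range (T+1), f s * u (n - (t+s)) ∈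
            Set.Icc (0:ℝ) (1 - ∑ s ∈ Finset.range (T+1), f s) :=
        ((eventually_atTop.mpr ⟨t + T + 1, hpt⟩).filter_mono hUle)
      have hlow : 0 ≤ v t - ∑ s ∈ Finset.range (T+1), f s * v (t+s) :=
        ge_of_tendsto htendsto (hev.mono fun n h => h.1)
      have hhigh : v t - ∑ s ∈ Finset.range (T+1), f s * v (t+s)
          ≤ 1 - ∑ s ∈ Finset.range (T+1), f s :=
        le_of_tendsto htendsto (hev.mono fun n h => h.2)
      rw [abs_le]
      constructor <;> [linarith [hfpart T]; linarith [hfpart T]]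
  -- extract ultrafilters converging to limsup and liminf
  have hclam : MapClusterPt lam atTop u := by
    apply mapClusterPt_of_freq
    intro ε hε
    have hfreq : ∃ᶠ n in atTop, lam - ε < u n :=
      frequently_lt_of_lt_limsup hcoble (by rw [← hlam]; linarith)
    have hev : ∀ᶠ n in atTop, u n < lam + ε :=
      eventually_lt_of_limsup_lt (by rw [← hlam]; linarith) hbddle
    exact (hfreq.and_eventually hev).mono fun n ⟨h1, h2⟩ => abs_lt.mpr ⟨by linarith, by linarith⟩
  have hceta : MapClusterPt eta atTop u := by
    apply mapClusterPt_of_freq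
    intro ε hε
    have hfreq : ∃ᶠ n in atTop, u n < eta + ε :=
      frequently_lt_of_liminf_lt hcobge (by rw [← heta]; linarith)
    have hev : ∀ᶠ n in atTop, eta - ε < u n :=
      eventually_lt_of_lt_liminf (by rw [← heta]; linarith) hbddge
    exact (hfreq.and_eventually hev).mono fun n ⟨h1, h2⟩ => abs_lt.mpr ⟨by linarith, by linarith⟩
  obtain ⟨U₁, hU₁le, hU₁⟩ := mapClusterPt_iff_ultrafilter.mp hclam
  obtain ⟨U₂, hU₂le, hU₂⟩ := mapClusterPt_iff_ultrafilter.mp hceta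
  obtain ⟨v₁, hv₁T, hv₁I, hv₁b, hv₁lin⟩ := main U₁ hU₁le
  obtain ⟨v₂, hv₂T, hv₂I, hv₂b, hv₂lin⟩ := main U₂ hU₂le
  -- v 0 values
  have hv₁0 : v₁ 0 = lam := by
    have h0 : Tendsto (fun n : ℕ => u (n - 0)) ↑U₁ (𝓝 lam) := by simpa using hU₁
    exact tendsto_nhds_unique (hv₁T 0) h0
  have hv₂0 : v₂ 0 = eta := by
    have h0 : Tendsto (fun n : ℕ => u (n - 0)) ↑U₂ (𝓝 eta) := by simpa using hU₂
    exact tendsto_nhds_unique (hv₂T 0) h0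
  -- v constant on the tail [N, ∞)
  have hlam1 : |lam| ≤ 1 := abs_le.mpr ⟨by linarith [hlam_mem.1], hlam_mem.2⟩
  have heta1 : |eta| ≤ 1 := abs_le.mpr ⟨by linarith [heta_mem.1], heta_mem.2⟩
  have hv₁N : ∀ t, N ≤ t → v₁ t = lam := by
    have hstep : ∀ x ∈ AddSubmonoid.closure {s | 0 < f s},
        ∀ t, v₁ t = lam → v₁ (t + x) = lam := by
      intro x hx
      induction hx using AddSubmonoid.closure_induction with
      | mem s hs =>
        exact fun t ht => renewal_force f hf hfs v₁ lam hlam1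
          (fun t' => (hv₁b t').2) hv₁lin t ht s hs
      | zero =>
        exact fun t ht => by simpa using ht
      | add x y hx hy ihx ihy =>
        intro t ht
        rw [← add_assoc]; exact ihy _ (ihx _ ht)
    intro t ht
    have := hstep t (hNmem t ht) 0 hv₁0
    simpa using this
  have hv₂N : ∀ t, N ≤ t → v₂ t = eta := by
    have hstep : ∀ x ∈ AddSubmonoid.closure {s | 0 < f s},
        ∀ t, v₂ t = eta → v₂ (t + x) = eta := by
      intro x hx
      induction hx using AddSubmonoid.closure_induction with
      | mem s hs =>
        intro t ht
        have hneg := renewal_force f hf hfs (fun k => - v₂ k) (-eta) (by rwa [abs_neg])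
          (fun t' => neg_le_neg (hv₂b t').1)
          (fun t' T => by
            have hrw : (fun k => - v₂ k) t'
                - ∑ s ∈ Finset.range (T+1), f s * (fun k => - v₂ k) (t'+s)
                = -(v₂ t' - ∑ s ∈ Finset.range (T+1), f s * v₂ (t'+s)) := by
              simp [mul_neg]
              ring
            rw [hrw, abs_neg]
            exact hv₂lin t' T)
          t (by simp [ht]) s hs
        have := congrArg Neg.neg hneg
        simpa using this
      | zero =>
        exact fun t ht => by simpa using ht
      | add x y hx hy ihx ihy =>
        intro t ht
        rw [← add_assoc]; exact ihy _ (ihx _ ht)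
    intro t ht
    have := hstep t (hNmem t ht) 0 hv₂0
    simpa using this
  -- upper bound : m * lam ≤ 1
  have hlam_le : m * lam ≤ 1 := by
    have hT : ∀ T : ℕ, (∑ j ∈ Finset.range (T+1), b j) * lam ≤ 1 := by
      intro T
      have hpt : ∀ n, N + T ≤ n → ∑ j ∈ Finset.range (T+1), b j * u (n - (N+j)) ≤ 1 := by
        intro n hn
        have hidn := hid (n - N)
        have hrw : ∀ j : ℕ, (n - N) - j = n - (N + j) := fun j => by omega
        have hidn' : ∑ j ∈ Finset.range ((n-N)+1), b j * u (n - (N+j)) = 1 := by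
          rw [← hidn]; exact Finset.sum_congr rfl (fun j _ => by rw [hrw j])
        have hsub : Finset.range (T+1) ⊆ Finset.range ((n-N)+1) :=
          Finset.range_subset_range.mpr (by omega)
        calc ∑ j ∈ Finset.range (T+1), b j * u (n - (N+j))
            ≤ ∑ j ∈ Finset.range ((n-N)+1), b j * u (n - (N+j)) :=
              Finset.sum_le_sum_of_subset_of_nonneg hsub
                (fun j _ _ => mul_nonneg (hbnn j) (hunn _))
          _ = 1 := hidn'
      have htendsto : Tendsto (fun n => ∑ j ∈ Finset.range (T+1), b j * u (n - (N+j))) ↑U₁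
          (𝓝 (∑ j ∈ Finset.range (T+1), b j * v₁ (N+j))) :=
        tendsto_finset_sum _ (fun j _ => ((hv₁T (N+j)).const_mul (b j)))
      have hle1 : ∑ j ∈ Finset.range (T+1), b j * v₁ (N+j) ≤ 1 :=
        le_of_tendsto htendsto ((eventually_atTop.mpr ⟨N+T, hpt⟩).filter_mono hU₁le)
      have hconst : ∑ j ∈ Finset.range (T+1), b j * v₁ (N+j)
          = (∑ j ∈ Finset.range (T+1), b j) * lam := by
        rw [Finset.sum_mul]
        exact Finset.sum_congr rfl (fun j _ => by rw [hv₁N (N+j) (by omega)])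
      rwa [hconst] at hle1
    have hlim : Tendsto (fun T : ℕ => (∑ j ∈ Finset.range (T+1), b j) * lam) atTop
        (𝓝 (m * lam)) := hbtend.mul_const lam
    exact le_of_tendsto hlim (Eventually.of_forall hT)
  -- lower bound : 1 ≤ m * eta
  have heta_ge : 1 ≤ m * eta := by
    have hT : ∀ T : ℕ, 1 ≤ (∑ j ∈ Finset.range (T+1), b j) * eta
        + (m - ∑ j ∈ Finset.range (T+1), b j) := by
      intro T
      have hpt : ∀ n, N + T ≤ n → 1 ≤ ∑ j ∈ Finset.range (T+1), b j * u (n - (N+j))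
          + (m - ∑ j ∈ Finset.range (T+1), b j) := by
        intro n hn
        have hidn := hid (n - N)
        have hrw : ∀ j : ℕ, (n - N) - j = n - (N + j) := fun j => by omega
        have hidn' : ∑ j ∈ Finset.range ((n-N)+1), b j * u (n - (N+j)) = 1 := by
          rw [← hidn]; exact Finset.sum_congr rfl (fun j _ => by rw [hrw j])
        have hsub : Finset.range (T+1) ⊆ Finset.range ((n-N)+1) :=
          Finset.range_subset_range.mpr (by omega)
        have hdiff : ∑ j ∈ Finset.range ((n-N)+1) \ Finset.range (T+1), b j * u (n - (N+j))
            = ∑ j ∈ Finset.range ((n-N)+1), b j * u (n - (N+j))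
              - ∑ j ∈ Finset.range (T+1), b j * u (n - (N+j)) :=
          Finset.sum_sdiff_eq_sub hsub
        have hbd : ∑ j ∈ Finset.range ((n-N)+1) \ Finset.range (T+1), b j * u (n - (N+j))
            ≤ m - ∑ j ∈ Finset.range (T+1), b j := by
          calc ∑ j ∈ Finset.range ((n-N)+1) \ Finset.range (T+1), b j * u (n - (N+j))
              ≤ ∑ j ∈ Finset.range ((n-N)+1) \ Finset.range (T+1), b j :=
                Finset.sum_le_sum fun j _ => mul_le_of_le_one_right (hbnn j) (hub _)
            _ = ∑ j ∈ Finset.range ((n-N)+1), b j - ∑ j ∈ Finset.range (T+1), b j :=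
                Finset.sum_sdiff_eq_sub hsub
            _ ≤ m - ∑ j ∈ Finset.range (T+1), b j := by linarith [hbpart (n-N)]
        linarith [hidn', hdiff, hbd]
      have htendsto : Tendsto (fun n => ∑ j ∈ Finset.range (T+1), b j * u (n - (N+j))
          + (m - ∑ j ∈ Finset.range (T+1), b j)) ↑U₂
          (𝓝 (∑ j ∈ Finset.range (T+1), b j * v₂ (N+j)
            + (m - ∑ j ∈ Finset.range (T+1), b j))) :=
        (tendsto_finset_sum _ (fun j _ => ((hv₂T (N+j)).const_mul (b j)))).add tendsto_const_nhds
      have hge1 : 1 ≤ ∑ j ∈ Finset.range (T+1), b j * v₂ (N+j)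
          + (m - ∑ j ∈ Finset.range (T+1), b j) :=
        ge_of_tendsto htendsto ((eventually_atTop.mpr ⟨N+T, hpt⟩).filter_mono hU₂le)
      have hconst : ∑ j ∈ Finset.range (T+1), b j * v₂ (N+j)
          = (∑ j ∈ Finset.range (T+1), b j) * eta := by
        rw [Finset.sum_mul]
        exact Finset.sum_congr rfl (fun j _ => by rw [hv₂N (N+j) (by omega)])
      rwa [hconst] at hge1
    have hlim : Tendsto (fun T : ℕ => (∑ j ∈ Finset.range (T+1), b j) * eta
        + (m - ∑ j ∈ Finset.range (T+1), b j)) atTop (𝓝 (m * eta + (m - m))) :=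
      (hbtend.mul_const eta).add (tendsto_const_nhds.sub hbtend)
    have := ge_of_tendsto hlim (Eventually.of_forall hT)
    linarith
  -- finish
  have h1 : lam ≤ 1/m := by rw [le_div_iff₀ hmpos]; linarith
  have h2 : 1/m ≤ eta := by rw [div_le_iff₀ hmpos]; linarith
  exact tendsto_of_liminf_eq_limsup (by rw [← heta]; linarith) (by rw [← hlam]; linarith)
    hbddle hbddge

set_option maxHeartbeats 1000000 in
/-- If `μ` has finite mean `m = ∑_{s≥1} s μ_s < ∞` and the gcd of the
support `{s ≥ 1 : μ_s > 0}` equals `1`, then `lim_{n→∞} P[E_n] = 1/m`. -/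
theorem esc_renewal_theorem
    {Ω : Type*} [MeasurableSpace Ω] (P : Measure Ω) [IsProbabilityMeasure P]
    (S : ℕ → Ω → ℕ)
    (hmeas : ∀ i, Measurable (S i))
    (hindep : iIndepFun S P)
    (hident : ∀ i, IdentDistrib (S i) (S 0) P P)
    (hpos : ∀ i ω, 0 < S i ω)
    (μ : ℕ → ℝ)
    (hμ : ∀ s, μ s = (P {ω | S 0 ω = s}).toReal)
    (E : ℕ → Set Ω)
    (hE : ∀ n, E n = {ω | ∃ K, ∑ j ∈ Finset.range K, S j ω = n})
    (hmean : Summable (fun s : ℕ => (s : ℝ) * μ s))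
    (hgcd : ∀ d : ℕ, (∀ s : ℕ, 0 < μ s → d ∣ s) → d = 1) :
    Tendsto (fun n : ℕ => (P (E n)).toReal) atTop
      (nhds (1 / ∑' s : ℕ, (s : ℝ) * μ s)) := by
  classical
  -- partial sums
  set T : ℕ → Ω → ℕ := fun K ω => ∑ j ∈ Finset.range K, S j ω with hT
  have hTmeas : ∀ K, Measurable (T K) := by
    intro K
    exact Finset.measurable_sum _ (fun i _ => hmeas i)
  set A : ℕ → ℕ → Set Ω := fun K n => T K ⁻¹' {n} with hA
  have hAmeas : ∀ K n, MeasurableSet (A K n) := fun K n =>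
    hTmeas K (measurableSet_singleton n)
  have hTsm : ∀ ω, StrictMono (fun K => T K ω) := by
    intro ω
    apply strictMono_nat_of_lt_succ
    intro K
    simp only [hT, Finset.sum_range_succ]
    exact Nat.lt_add_of_pos_right (hpos K ω)
  have hTge : ∀ K ω, K ≤ T K ω := by
    intro K ω
    have h := Finset.card_nsmul_le_sum (Finset.range K) (fun j => S j ω) 1
      (fun j _ => hpos j ω)
    simpa using h
  have hT0 : ∀ ω, T 0 ω = 0 := fun ω => by simp [hT]
  have hTsucc : ∀ K ω, T (K+1) ω = T K ω + S K ω := fun K ω => by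
    simp [hT, Finset.sum_range_succ]
  -- E as disjoint union
  have hEU : ∀ n, E n = ⋃ K, A K n := by
    intro n
    rw [hE]
    ext ω
    simp [hA, hT]
  have hdisj : ∀ n, Pairwise (Function.onFun Disjoint (fun K => A K n)) := by
    intro n K K' hne
    apply Set.disjoint_left.mpr
    intro ω h1 h2
    exact hne ((hTsm ω).injective ((Set.mem_preimage.mp h1).trans
      (Set.mem_preimage.mp h2).symm))
  have hPE : ∀ n, P (E n) = ∑' K, P (A K n) := by
    intro n
    rw [hEU n]
    exact measure_iUnion (hdisj n) (fun K => hAmeas K n)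
  -- independence facts
  have hind : ∀ K, IndepFun (T K) (S K) P := by
    intro K
    have h := hindep.indepFun_sum_range_succ hmeas K
    have hfun : (∑ j ∈ Finset.range K, S j) = T K := by
      ext ω
      simp [hT]
    rwa [hfun] at h
  have hmul : ∀ K (s1 s2 : Set ℕ),
      P (T K ⁻¹' s1 ∩ S K ⁻¹' s2) = P (T K ⁻¹' s1) * P (S K ⁻¹' s2) := by
    intro K s1 s2
    exact (hind K).measure_inter_preimage_eq_mul s1 s2
      (s1.to_countable.measurableSet) (s2.to_countable.measurableSet)
  -- marginals
  set ν : ℕ → ℝ≥0∞ := fun s => P (S 0 ⁻¹' {s}) with hν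
  set B : ℕ → ℝ≥0∞ := fun t => P (S 0 ⁻¹' Set.Ioi t) with hB
  have hνK : ∀ K s, P (S K ⁻¹' {s}) = ν s := fun K s =>
    (hident K).measure_mem_eq (measurableSet_singleton s)
  have hBK : ∀ K t, P (S K ⁻¹' Set.Ioi t) = B t := fun K t =>
    (hident K).measure_mem_eq measurableSet_Ioi
  have hμν : ∀ s, μ s = (ν s).toReal := by
    intro s
    rw [hμ s, hν]
    congr 1
  have hνμ : ∀ s, ν s = ENNReal.ofReal (μ s) := by
    intro s
    rw [hμν s, ENNReal.ofReal_toReal (measure_ne_top P _)]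
  -- renewal equation in ℝ≥0∞
  have hrenE : ∀ n : ℕ, 1 ≤ n → P (E n) = ∑ s ∈ Finset.range (n+1), ν s * P (E (n - s)) := by
    intro n hn
    have hA0 : P (A 0 n) = 0 := by
      have hempty : A 0 n = ∅ := by
        ext ω
        simp only [Set.mem_empty_iff_false, iff_false]
        intro h
        have h' : T 0 ω = n := h
        rw [hT0] at h'
        omega
      rw [hempty, measure_empty]
    have hsplit : ∀ K, A (K+1) n = ⋃ s ∈ Finset.range (n+1), (A K (n - s) ∩ S K ⁻¹' {s}) := by
      intro K
      ext ω
      simp only [hA, Set.mem_preimage, Set.mem_singleton_iff, Set.mem_iUnion,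
        Set.mem_inter_iff, Finset.mem_range, exists_prop]
      have hTs := hTsucc K ω
      constructor
      · intro h
        exact ⟨S K ω, by omega, by omega, rfl⟩
      · rintro ⟨s, hs, h1, h2⟩
        omega
    have hPsucc : ∀ K, P (A (K+1) n)
        = ∑ s ∈ Finset.range (n+1), P (A K (n - s)) * ν s := by
      intro K
      rw [hsplit K]
      rw [measure_biUnion_finset]
      · exact Finset.sum_congr rfl (fun s _ => by rw [hmul K {n - s} {s}, hνK K s])
      · intro s hs s' hs' hne
        apply Set.disjoint_left.mpr
        intro ω h1 h2
        exact hne ((h1.2 : S K ω = _).symm.trans h2.2)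
      · exact fun s _ => (hAmeas K (n-s)).inter (hmeas K (measurableSet_singleton s))
    calc P (E n) = ∑' K, P (A K n) := hPE n
      _ = P (A 0 n) + ∑' K, P (A (K+1) n) := tsum_eq_zero_add' ENNReal.summable
      _ = ∑' K, P (A (K+1) n) := by rw [hA0, zero_add]
      _ = ∑' K, ∑ s ∈ Finset.range (n+1), P (A K (n - s)) * ν s := by
          exact tsum_congr hPsucc
      _ = ∑ s ∈ Finset.range (n+1), ∑' K, P (A K (n - s)) * ν s :=
          Summable.tsum_finsetSum (fun s _ => ENNReal.summable)
      _ = ∑ s ∈ Finset.range (n+1), ν s * P (E (n - s)) := by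
          refine Finset.sum_congr rfl (fun s _ => ?_)
          rw [ENNReal.tsum_mul_right, ← hPE, mul_comm]
  -- the key identity in ℝ≥0∞
  have hidE : ∀ n : ℕ, ∑ j ∈ Finset.range (n+1), P (E j) * B (n - j) = 1 := by
    intro n
    set D : ℕ → ℕ → Set Ω := fun K j => A K j ∩ S K ⁻¹' (Set.Ioi (n - j)) with hD
    set G : ℕ → Set Ω := fun K => ⋃ j ∈ Finset.range (n+1), D K j with hG
    have hDmem : ∀ K j ω, ω ∈ D K j ↔ (T K ω = j ∧ n - j < S K ω) := by
      intro K j ω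
      simp [hD, hA]
    have hGmeas : ∀ K, MeasurableSet (G K) := by
      intro K
      exact Finset.measurableSet_biUnion _ (fun j _ =>
        (hAmeas K j).inter (hmeas K measurableSet_Ioi))
    have hGcover : (⋃ K, G K) = Set.univ := by
      ext ω
      simp only [Set.mem_iUnion, Set.mem_univ, iff_true, hG, Finset.mem_range]
      have hex : ∃ K, n < T K ω := ⟨n+1, lt_of_lt_of_le (Nat.lt_succ_self n) (hTge (n+1) ω)⟩
      set K0 := Nat.find hex with hK0def
      have hK0 : n < T K0 ω := Nat.find_spec hex
      have hK0pos : K0 ≠ 0 := by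
        intro h
        rw [h] at hK0
        rw [hT0 ω] at hK0
        omega
      have hle : T (K0 - 1) ω ≤ n := by
        have := Nat.find_min hex (m := K0 - 1) (by omega)
        omega
      refine ⟨K0 - 1, ⟨T (K0 - 1) ω, by omega, ?_⟩⟩
      rw [hDmem]
      refine ⟨rfl, ?_⟩
      have hsucc := hTsucc (K0 - 1) ω
      have : K0 - 1 + 1 = K0 := by omega
      rw [this] at hsucc
      omega
    have hcross : ∀ K j ω, ω ∈ D K j → j ∈ Finset.range (n+1) →
        T K ω ≤ n ∧ n < T (K+1) ω := by
      intro K j ω hω hj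
      rw [hDmem] at hω
      rw [Finset.mem_range] at hj
      have hsucc := hTsucc K ω
      constructor <;> omega
    have hGdis : Pairwise (Function.onFun Disjoint G) := by
      intro K K' hne
      apply Set.disjoint_left.mpr
      intro ω h1 h2
      simp only [hG, Set.mem_iUnion, exists_prop] at h1 h2
      obtain ⟨j, hj, hωj⟩ := h1
      obtain ⟨j', hj', hωj'⟩ := h2
      have c1 := hcross K j ω hωj hj
      have c2 := hcross K' j' ω hωj' hj'
      rcases hne.lt_or_gt with h | h
      · have : T (K+1) ω ≤ T K' ω := (hTsm ω).monotone (by omega)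
        omega
      · have : T (K'+1) ω ≤ T K ω := (hTsm ω).monotone (by omega)
        omega
    have hPG : ∀ K, P (G K) = ∑ j ∈ Finset.range (n+1), P (A K j) * B (n - j) := by
      intro K
      rw [hG]
      rw [measure_biUnion_finset]
      · exact Finset.sum_congr rfl (fun j _ => by
          rw [hD]
          rw [hmul K {j} (Set.Ioi (n - j)), hBK K (n - j)])
      · intro j hj j' hj' hne
        apply Set.disjoint_left.mpr
        intro ω h1 h2
        rw [hDmem] at h1 h2
        exact hne (h1.1.symm.trans h2.1)
      · exact fun j _ => (hAmeas K j).inter (hmeas K measurableSet_Ioi)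
    calc ∑ j ∈ Finset.range (n+1), P (E j) * B (n - j)
        = ∑ j ∈ Finset.range (n+1), ∑' K, P (A K j) * B (n - j) := by
          refine Finset.sum_congr rfl (fun j _ => ?_)
          rw [hPE, ENNReal.tsum_mul_right]
      _ = ∑' K, ∑ j ∈ Finset.range (n+1), P (A K j) * B (n - j) :=
          (Summable.tsum_finsetSum (fun j _ => ENNReal.summable)).symm
      _ = ∑' K, P (G K) := tsum_congr (fun K => (hPG K).symm)
      _ = P (⋃ K, G K) := (measure_iUnion hGdis hGmeas).symm
      _ = 1 := by rw [hGcover, measure_univ]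
  -- total mass of ν
  have hνsum : ∑' s, ν s = 1 := by
    have hcov : (⋃ s : ℕ, S 0 ⁻¹' {s}) = Set.univ := by
      ext ω
      simp
    have hdis : Pairwise (Function.onFun Disjoint (fun s : ℕ => S 0 ⁻¹' {s})) := by
      intro s s' hne
      apply Set.disjoint_left.mpr
      intro ω h1 h2
      simp only [Set.mem_preimage, Set.mem_singleton_iff] at h1 h2
      exact hne (h1.symm.trans h2)
    rw [hν]
    rw [← measure_iUnion hdis (fun s => hmeas 0 (measurableSet_singleton s))]
    rw [hcov, measure_univ]
  -- tail sum identity : ∑' t, B t = ∑' s, s * ν s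
  have hBsum : ∑' t, B t = ∑' s : ℕ, (s : ℝ≥0∞) * ν s := by
    have hBt : ∀ t, B t = ∑' s : ℕ, (if t < s then ν s else 0) := by
      intro t
      have hcov : S 0 ⁻¹' Set.Ioi t = ⋃ s : ℕ, (if t < s then S 0 ⁻¹' {s} else ∅) := by
        ext ω
        simp only [Set.mem_preimage, Set.mem_Ioi, Set.mem_iUnion]
        constructor
        · intro h
          exact ⟨S 0 ω, by rw [if_pos h]; simp⟩
        · rintro ⟨s, hs⟩
          by_cases h : t < s
          · rw [if_pos h] at hs
            simp only [Set.mem_preimage, Set.mem_singleton_iff] at hs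
            omega
          · rw [if_neg h] at hs
            exact absurd hs (Set.notMem_empty ω)
      show P (S 0 ⁻¹' Set.Ioi t) = _
      rw [hcov]
      rw [measure_iUnion]
      · exact tsum_congr (fun s => by split_ifs <;> simp [hν])
      · intro s s' hne
        apply Set.disjoint_left.mpr
        intro ω h1 h2
        simp only [Set.mem_ite_empty_right, Set.mem_preimage, Set.mem_singleton_iff] at h1 h2
        exact hne (h1.2.symm.trans h2.2)
      · intro s
        split_ifs
        · exact hmeas 0 (measurableSet_singleton s)
        · exact MeasurableSet.empty
    calc ∑' t, B t = ∑' t, ∑' s : ℕ, (if t < s then ν s else 0) := tsum_congr hBt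
      _ = ∑' s : ℕ, ∑' t, (if t < s then ν s else 0) := ENNReal.tsum_comm
      _ = ∑' s : ℕ, (s : ℝ≥0∞) * ν s := by
          refine tsum_congr (fun s => ?_)
          rw [tsum_eq_sum (s := Finset.range s) (fun t ht => by
            rw [if_neg]; simpa using ht)]
          rw [Finset.sum_ite_of_true (fun t ht => Finset.mem_range.mp ht)]
          simp [Finset.sum_const, nsmul_eq_mul]
  -- convert everything to real numbers
  have hμnn : ∀ s, 0 ≤ μ s := fun s => by rw [hμν s]; exact ENNReal.toReal_nonneg
  set m : ℝ := ∑' s : ℕ, (s : ℝ) * μ s with hm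
  have hmnn : 0 ≤ m := tsum_nonneg (fun s => mul_nonneg (Nat.cast_nonneg s) (hμnn s))
  have hBofReal : ∑' t, B t = ENNReal.ofReal m := by
    rw [hBsum, hm, ENNReal.ofReal_tsum_of_nonneg
      (fun s => mul_nonneg (Nat.cast_nonneg s) (hμnn s)) hmean]
    refine tsum_congr (fun s => ?_)
    rw [hνμ s, ENNReal.ofReal_mul (Nat.cast_nonneg s), ENNReal.ofReal_natCast]
  have hBne : ∑' t, B t ≠ ⊤ := by rw [hBofReal]; exact ENNReal.ofReal_ne_top
  set u : ℕ → ℝ := fun n => (P (E n)).toReal with hu'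
  set b : ℕ → ℝ := fun t => (B t).toReal with hb'
  have hbm : HasSum b m := by
    have h1 := (ENNReal.summable_toReal hBne).hasSum
    rwa [← ENNReal.tsum_toReal_eq (fun t => measure_ne_top P _), hBofReal,
      ENNReal.toReal_ofReal hmnn] at h1
  have hfs : HasSum μ 1 := by
    have hne : ∑' s, ν s ≠ ⊤ := by rw [hνsum]; exact ENNReal.one_ne_top
    have h1 := (ENNReal.summable_toReal hne).hasSum
    rw [← ENNReal.tsum_toReal_eq (fun s => measure_ne_top P _), hνsum] at h1
    have h2 : (fun s => (ν s).toReal) = μ := funext (fun s => (hμν s).symm)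
    rw [h2] at h1
    simpa using h1
  have hu0 : u 0 = 1 := by
    have hE0 : E 0 = Set.univ := by
      rw [hE 0]
      ext ω
      simp only [Set.mem_setOf_eq, Set.mem_univ, iff_true]
      exact ⟨0, by simp⟩
    rw [hu']
    simp [hE0]
  have huI : ∀ n, u n ∈ Set.Icc (0:ℝ) 1 := by
    intro n
    refine ⟨ENNReal.toReal_nonneg, ?_⟩
    calc (P (E n)).toReal ≤ (1 : ℝ≥0∞).toReal :=
          ENNReal.toReal_mono ENNReal.one_ne_top prob_le_one
      _ = 1 := by simp
  have hren : ∀ n, 1 ≤ n → u n = ∑ s ∈ Finset.range (n+1), μ s * u (n - s) := by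
    intro n hn
    show (P (E n)).toReal = _
    rw [hrenE n hn, ENNReal.toReal_sum
      (fun s _ => ENNReal.mul_ne_top (measure_ne_top P _) (measure_ne_top P _))]
    exact Finset.sum_congr rfl (fun s _ => by rw [ENNReal.toReal_mul, hμν s])
  have hid : ∀ n, ∑ j ∈ Finset.range (n+1), b j * u (n - j) = 1 := by
    intro n
    have h1 : ∑ j ∈ Finset.range (n+1), u j * b (n - j) = 1 := by
      have := hidE n
      have h2 := congrArg ENNReal.toReal this
      rw [ENNReal.toReal_sum
        (fun j _ => ENNReal.mul_ne_top (measure_ne_top P _) (measure_ne_top P _))] at h2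
      simp only [ENNReal.toReal_mul, ENNReal.toReal_one] at h2
      exact h2
    have h3 := Finset.sum_range_reflect (fun j => u j * b (n - j)) (n+1)
    rw [← h1, ← h3]
    refine Finset.sum_congr rfl (fun j hj => ?_)
    rw [Finset.mem_range] at hj
    have h4 : n + 1 - 1 - j = n - j := by omega
    have h5 : n - (n - j) = j := by omega
    rw [h4, h5, mul_comm]
  exact renewal_seq_tendsto μ u b m hμnn hfs hu0 huI hren
    (fun t => ENNReal.toReal_nonneg) hbm hid hgcd
end

section
/- For every integer n ≥ 1, P[E_n] = Σ_{k=1}^{n} B̂_{n,k}(μ), where B̂_{n,k}(μ) = Σ (k!/(j_1! j_2! ⋯ j_{n−k+1}!)) ∏_{i=1}^{n−k+1} μ_i^{j_i}, the sum ranging over all nonnegative integers j_1, …, j_{n−k+1} satisfying Σ_{i=1}^{n−k+1} j_i = k and Σ_{i=1}^{n−k+1} i·j_i = n. -/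
open Finset Polynomial

lemma icc_image (m : ℕ) : Finset.Icc 1 m = Finset.image (· + 1) (Finset.range m) := by
  ext x; simp only [Finset.mem_Icc, Finset.mem_image, Finset.mem_range]
  constructor
  · rintro ⟨h1, h2⟩; exact ⟨x - 1, by omega, by omega⟩
  · rintro ⟨a, h, rfl⟩; omega

lemma icc_sum_fin {α : Type*} [AddCommMonoid α] (m : ℕ) (g : ℕ → α) :
    ∑ v ∈ Finset.Icc 1 m, g v = ∑ i : Fin m, g (i.val + 1) := by
  rw [icc_image, Finset.sum_image (by intro a _ b _ h; simpa using h),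
    Fin.sum_univ_eq_sum_range (fun i => g (i + 1)) m]

lemma icc_prod_fin {α : Type*} [CommMonoid α] (m : ℕ) (g : ℕ → α) :
    ∏ v ∈ Finset.Icc 1 m, g v = ∏ i : Fin m, g (i.val + 1) := by
  rw [icc_image, Finset.prod_image (by intro a _ b _ h; simpa using h),
    Fin.prod_univ_eq_prod_range (fun i => g (i + 1)) m]

lemma combo (μ : ℕ → ℝ) (k n : ℕ) (hk1 : 1 ≤ k) (hkn : k ≤ n) :
    ∑ f ∈ (Fintype.piFinset fun _ : Fin k => Finset.Icc 1 (n - k + 1)).filter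
        (fun f => ∑ i, f i = n), ∏ i, μ (f i)
    = ∑ J ∈ Finset.filter
        (fun J : Fin (n - k + 1) → ℕ =>
          (∑ i, J i = k) ∧ ∑ i, (i.val + 1) * J i = n)
        (Fintype.piFinset fun _ => Finset.range (k + 1)),
        ((k.factorial : ℝ) / ∏ i, ((J i).factorial : ℝ)) *
          ∏ i, μ (i.val + 1) ^ J i := by
  classical
  set m := n - k + 1 with hm
  set p : Polynomial ℝ := (∑ v ∈ Finset.Icc 1 m, C (μ v) * X ^ v) ^ k with hp
  have way1 : p.coeff n = ∑ f ∈ (Fintype.piFinset fun _ : Fin k => Finset.Icc 1 m).filter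
      (fun f => ∑ i, f i = n), ∏ i, μ (f i) := by
    have h1 : p = ∑ f ∈ Fintype.piFinset (fun _ : Fin k => Finset.Icc 1 m),
        C (∏ i, μ (f i)) * X ^ (∑ i, f i) := by
      rw [hp]
      rw [show ((∑ v ∈ Finset.Icc 1 m, C (μ v) * X ^ v) ^ k)
          = ∏ _i : Fin k, (∑ v ∈ Finset.Icc 1 m, C (μ v) * X ^ v) by
        rw [Finset.prod_const, Finset.card_univ, Fintype.card_fin]]
      rw [Finset.prod_univ_sum (fun _ : Fin k => Finset.Icc 1 m) (fun _ v => C (μ v) * X ^ v)]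
      refine Finset.sum_congr rfl fun f _ => ?_
      rw [Finset.prod_mul_distrib, ← map_prod, Finset.prod_pow_eq_pow_sum]
    rw [h1, Polynomial.finset_sum_coeff]
    rw [Finset.sum_filter]
    refine Finset.sum_congr rfl fun f _ => ?_
    rw [Polynomial.coeff_C_mul, Polynomial.coeff_X_pow]
    by_cases h : (∑ i, f i) = n
    · simp [h]
    · rw [if_neg (fun hh => h hh.symm)]; simp [h]
  have way2 : p.coeff n = ∑ J ∈ (Finset.piAntidiag (Finset.Icc 1 m) k).filter
      (fun J => ∑ v ∈ Finset.Icc 1 m, v * J v = n),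
      (Nat.multinomial (Finset.Icc 1 m) J : ℝ) * ∏ v ∈ Finset.Icc 1 m, μ v ^ J v := by
    have h2 : p = ∑ J ∈ Finset.piAntidiag (Finset.Icc 1 m) k,
        C ((Nat.multinomial (Finset.Icc 1 m) J : ℝ) * ∏ v ∈ Finset.Icc 1 m, μ v ^ J v)
          * X ^ (∑ v ∈ Finset.Icc 1 m, v * J v) := by
      rw [hp, Finset.sum_pow_eq_sum_piAntidiag]
      refine Finset.sum_congr rfl fun J _ => ?_
      rw [show ∏ v ∈ Finset.Icc 1 m, (C (μ v) * X ^ v) ^ J v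
          = C (∏ v ∈ Finset.Icc 1 m, μ v ^ J v) * X ^ (∑ v ∈ Finset.Icc 1 m, v * J v) by
        calc ∏ v ∈ Finset.Icc 1 m, (C (μ v) * X ^ v) ^ J v
            = ∏ v ∈ Finset.Icc 1 m, (C (μ v ^ J v) * X ^ (v * J v)) := by
              refine Finset.prod_congr rfl fun v _ => ?_
              rw [mul_pow, ← map_pow, ← pow_mul]
          _ = _ := by
              rw [Finset.prod_mul_distrib, ← map_prod, Finset.prod_pow_eq_pow_sum]]
      rw [← mul_assoc, ← Polynomial.C_eq_natCast, ← map_mul]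
    rw [h2, Polynomial.finset_sum_coeff, Finset.sum_filter]
    refine Finset.sum_congr rfl fun J _ => ?_
    rw [Polynomial.coeff_C_mul, Polynomial.coeff_X_pow]
    by_cases h : (∑ v ∈ Finset.Icc 1 m, v * J v) = n
    · simp [h]
    · rw [if_neg (fun hh => h hh.symm)]; simp [h]
  rw [← way1, way2]
  refine Finset.sum_bij' (i := fun J _ => fun i : Fin m => J (i.val + 1))
    (j := fun J' _ => fun v => if h : 1 ≤ v ∧ v ≤ m then J' ⟨v - 1, by omega⟩ else 0)
    ?_ ?_ ?_ ?_ ?_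
  · intro J hJ
    rw [Finset.mem_filter, Finset.mem_piAntidiag] at hJ
    obtain ⟨⟨hsum, hsupp⟩, hwt⟩ := hJ
    rw [Finset.mem_filter]
    dsimp only
    refine ⟨?_, ?_, ?_⟩
    · rw [Fintype.mem_piFinset]
      intro i
      rw [Finset.mem_range, Nat.lt_succ_iff, ← hsum]
      by_cases hi : (i.val + 1) ∈ Finset.Icc 1 m
      · exact Finset.single_le_sum (fun _ _ => Nat.zero_le _) hi
      · exact absurd (Finset.mem_Icc.2 ⟨by omega, by omega⟩) hi
    · rw [← hsum, icc_sum_fin]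
    · rw [← hwt, icc_sum_fin]
  · intro J' hJ'
    rw [Finset.mem_filter] at hJ'
    obtain ⟨_, hsum, hwt⟩ := hJ'
    rw [Finset.mem_filter, Finset.mem_piAntidiag]
    dsimp only
    refine ⟨⟨?_, ?_⟩, ?_⟩
    · rw [icc_sum_fin m]
      rw [show (∑ i : Fin m, if h : 1 ≤ i.val + 1 ∧ i.val + 1 ≤ m
            then J' ⟨i.val + 1 - 1, by omega⟩ else 0) = ∑ i : Fin m, J' i from
        Finset.sum_congr rfl fun i _ => by
          rw [dif_pos ⟨by omega, by omega⟩]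
          exact congrArg J' (Fin.ext (by simp))]
      exact hsum
    · intro v hv
      by_contra hvm
      exact hv (dif_neg (fun h => hvm (Finset.mem_Icc.2 h)))
    · rw [icc_sum_fin m]
      rw [show (∑ i : Fin m, (i.val + 1) * if h : 1 ≤ i.val + 1 ∧ i.val + 1 ≤ m
            then J' ⟨i.val + 1 - 1, by omega⟩ else 0) = ∑ i : Fin m, (i.val + 1) * J' i from
        Finset.sum_congr rfl fun i _ => by
          rw [dif_pos ⟨by omega, by omega⟩]
          exact congrArg _ (congrArg J' (Fin.ext (by simp)))]
      exact hwt
  · intro J hJ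
    rw [Finset.mem_filter, Finset.mem_piAntidiag] at hJ
    obtain ⟨⟨hsum, hsupp⟩, hwt⟩ := hJ
    dsimp only
    funext v
    by_cases hv : 1 ≤ v ∧ v ≤ m
    · rw [dif_pos hv]
      congr 1
      omega
    · rw [dif_neg hv]
      by_contra h0
      exact hv (Finset.mem_Icc.1 (hsupp v (fun hh => h0 hh.symm)))
  · intro J' hJ'
    dsimp only
    funext i
    rw [dif_pos ⟨by omega, by omega⟩]
    exact congrArg J' (Fin.ext (by simp))
  · intro J hJ
    rw [Finset.mem_filter, Finset.mem_piAntidiag] at hJ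
    obtain ⟨⟨hsum, hsupp⟩, hwt⟩ := hJ
    dsimp only
    have hmult : (Nat.multinomial (Finset.Icc 1 m) J : ℝ)
        = (k.factorial : ℝ) / ∏ v ∈ Finset.Icc 1 m, ((J v).factorial : ℝ) := by
      rw [eq_div_iff (by positivity)]
      rw [← Nat.cast_prod, ← Nat.cast_mul, mul_comm, Nat.multinomial_spec, hsum]
    rw [hmult, icc_prod_fin m (fun v => μ v ^ J v), icc_prod_fin m (fun v => ((J v).factorial : ℝ))]

open MeasureTheory ProbabilityTheory

set_option maxHeartbeats 1000000

/-- For every integer `n ≥ 1`, `P[E_n] = ∑_{k=1}^n B̂_{n,k}(μ)`, where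
`B̂_{n,k}(μ)` is the ordinary Bell polynomial
`∑ (k!/(j_1!⋯j_{n−k+1}!)) ∏_i μ_i^{j_i}` over all nonnegative integers
`j_1,…,j_{n−k+1}` with `∑ j_i = k` and `∑ i·j_i = n`. -/
theorem esc_prob_event_eq_sum_bell
    {Ω : Type*} [MeasurableSpace Ω] (P : Measure Ω) [IsProbabilityMeasure P]
    (S : ℕ → Ω → ℕ)
    (hmeas : ∀ i, Measurable (S i))
    (hindep : iIndepFun S P)
    (hident : ∀ i, IdentDistrib (S i) (S 0) P P)
    (hpos : ∀ i ω, 0 < S i ω)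
    (μ : ℕ → ℝ)
    (hμ : ∀ s, μ s = (P {ω | S 0 ω = s}).toReal)
    (E : ℕ → Set Ω)
    (hE : ∀ n, E n = {ω | ∃ K, ∑ j ∈ Finset.range K, S j ω = n})
    (n : ℕ) (hn : 1 ≤ n) :
    (P (E n)).toReal
      = ∑ k ∈ Finset.Icc 1 n,
          ∑ J ∈ Finset.filter
            (fun J : Fin (n - k + 1) → ℕ =>
              (∑ i, J i = k) ∧ ∑ i, (i.val + 1) * J i = n)
            (Fintype.piFinset fun _ => Finset.range (k + 1)),
            ((k.factorial : ℝ) / ∏ i, ((J i).factorial : ℝ)) *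
              ∏ i, μ (i.val + 1) ^ J i := by
  classical
  set A : ℕ → Set Ω := fun k => {ω | ∑ j ∈ Finset.range k, S j ω = n} with hA
  have hmono : ∀ ω, StrictMono fun K => ∑ j ∈ Finset.range K, S j ω := by
    intro ω
    apply strictMono_nat_of_lt_succ
    intro K
    rw [Finset.sum_range_succ]
    have := hpos K ω
    omega
  have hAmeas : ∀ k, MeasurableSet (A k) := by
    intro k
    have : Measurable fun ω => ∑ j ∈ Finset.range k, S j ω :=
      Finset.measurable_sum _ fun j _ => hmeas j
    exact this (measurableSet_singleton n)
  -- E n as a disjoint union of the A k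
  have hEn : E n = ⋃ k ∈ Finset.Icc 1 n, A k := by
    rw [hE]
    ext ω
    simp only [Set.mem_setOf_eq, Set.mem_iUnion, Finset.mem_Icc, exists_prop]
    constructor
    · rintro ⟨K, hK⟩
      refine ⟨K, ⟨?_, ?_⟩, hK⟩
      · rcases Nat.eq_zero_or_pos K with h | h
        · subst h; simp at hK; omega
        · exact h
      · calc K = ∑ _j ∈ Finset.range K, 1 := by simp
          _ ≤ ∑ j ∈ Finset.range K, S j ω :=
            Finset.sum_le_sum fun j _ => hpos j ω
          _ = n := hK
    · rintro ⟨k, _, hk⟩; exact ⟨k, hk⟩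
  have hdisj : (↑(Finset.Icc 1 n) : Set ℕ).PairwiseDisjoint A := by
    intro k _ k' _ hne
    refine Set.disjoint_left.2 fun ω h1 h2 => ?_
    exact hne ((hmono ω).injective (h1.trans h2.symm))
  have hPEn : P (E n) = ∑ k ∈ Finset.Icc 1 n, P (A k) := by
    rw [hEn, measure_biUnion_finset hdisj fun k _ => hAmeas k]
  -- probability of each A k
  have hPA : ∀ k, 1 ≤ k → k ≤ n →
      (P (A k)).toReal
        = ∑ f ∈ (Fintype.piFinset fun _ : Fin k => Finset.Icc 1 (n - k + 1)).filter
            (fun f => ∑ i, f i = n), ∏ i, μ (f i) := by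
    intro k hk1 hkn
    set F := (Fintype.piFinset fun _ : Fin k => Finset.Icc 1 (n - k + 1)).filter
        (fun f => ∑ i, f i = n) with hF
    set g : (Fin k → ℕ) → ℕ → ℕ :=
      fun f j => if h : j < k then f ⟨j, h⟩ else 0 with hg
    set C : (Fin k → ℕ) → Set Ω :=
      fun f => ⋂ j ∈ Finset.range k, S j ⁻¹' {g f j} with hC
    have hCmeas : ∀ f, MeasurableSet (C f) :=
      fun f => MeasurableSet.biInter (Finset.range k).countable_toSet
        fun j _ => hmeas j (measurableSet_singleton _)
    have hCmem : ∀ f ω, ω ∈ C f ↔ ∀ j (h : j < k), S j ω = f ⟨j, h⟩ := by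
      intro f ω
      simp only [hC, Set.mem_iInter, Set.mem_preimage, Set.mem_singleton_iff,
        Finset.mem_range, hg]
      constructor
      · intro h j hj
        have := h j hj
        rwa [dif_pos hj] at this
      · intro h j hj
        rw [dif_pos hj]
        exact h j hj
    have hAk : A k = ⋃ f ∈ F, C f := by
      ext ω
      simp only [hA, Set.mem_setOf_eq, Set.mem_iUnion, exists_prop]
      constructor
      · intro hsum
        refine ⟨fun i => S i ω, ?_, ?_⟩
        · rw [hF, Finset.mem_filter]
          constructor
          · rw [Fintype.mem_piFinset]
            intro i
            rw [Finset.mem_Icc]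
            have hi : (i : ℕ) ∈ Finset.range k := Finset.mem_range.2 i.isLt
            have hadd : S i ω + ∑ j ∈ (Finset.range k).erase i, S j ω
                = ∑ j ∈ Finset.range k, S j ω :=
              Finset.add_sum_erase (Finset.range k) (fun j => S j ω) hi
            have hcard : ((Finset.range k).erase i).card
                ≤ ∑ j ∈ (Finset.range k).erase i, S j ω := by
              calc ((Finset.range k).erase i).card
                  = ∑ _j ∈ (Finset.range k).erase i, 1 := by simp
                _ ≤ _ := Finset.sum_le_sum fun j _ => hpos j ω
            rw [Finset.card_erase_of_mem hi, Finset.card_range] at hcard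
            have h1 := hpos i ω
            omega
          · rw [Fin.sum_univ_eq_sum_range (fun j => S j ω) k]
            exact hsum
        · exact (hCmem (fun i => S (i : ℕ) ω) ω).2 fun j hj => rfl
      · rintro ⟨f, hfF, hfC⟩
        rw [hF, Finset.mem_filter] at hfF
        have h1 : ∀ i : Fin k, S i ω = f i := by
          intro i
          have := (hCmem f ω).1 hfC i i.isLt
          simpa using this
        calc ∑ j ∈ Finset.range k, S j ω
            = ∑ i : Fin k, S i ω := (Fin.sum_univ_eq_sum_range (fun j => S j ω) k).symm
          _ = ∑ i : Fin k, f i := Finset.sum_congr rfl fun i _ => h1 i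
          _ = n := hfF.2
    have hCdisj : (↑F : Set (Fin k → ℕ)).PairwiseDisjoint C := by
      intro f _ f' _ hne
      refine Set.disjoint_left.2 fun ω h1 h2 => ?_
      apply hne
      funext i
      rw [hCmem] at h1 h2
      have e1 := h1 i i.isLt
      have e2 := h2 i i.isLt
      simp only [Fin.eta] at e1 e2
      rw [← e1, ← e2]
    have hPC : ∀ f, (P (C f)).toReal = ∏ i : Fin k, μ (f i) := by
      intro f
      have := (iIndepFun_iff_measure_inter_preimage_eq_mul.1 hindep)
        (Finset.range k) (sets := fun j => {g f j})
        (fun j _ => measurableSet_singleton _)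
      rw [hC, this, ENNReal.toReal_prod]
      rw [← Fin.prod_univ_eq_prod_range (fun j => (P (S j ⁻¹' {g f j})).toReal) k]
      refine Finset.prod_congr rfl fun i _ => ?_
      rw [(hident i).measure_mem_eq (measurableSet_singleton _)]
      have : S 0 ⁻¹' {g f i} = {ω | S 0 ω = g f i} := rfl
      rw [this, ← hμ]
      congr 1
      simp only [hg, Fin.is_lt, dif_pos, Fin.eta]
    rw [hAk, measure_biUnion_finset hCdisj fun f _ => hCmeas f,
      ENNReal.toReal_sum fun f _ => measure_ne_top P _]
    exact Finset.sum_congr rfl fun f _ => hPC f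
  rw [hPEn, ENNReal.toReal_sum fun k _ => measure_ne_top P _]
  refine Finset.sum_congr rfl fun k hk => ?_
  rw [Finset.mem_Icc] at hk
  rw [hPA k hk.1 hk.2, combo μ k n hk.1 hk.2]
end

section
/- Suppose the cluster size distribution is a shifted Poisson: μ_k = λ^{k−1} e^{−λ}/(k−1)! for k ≥ 1 and μ_0 = 0, where λ > 0. Then for every integer n ≥ 1, P[E_n] = Σ_{k=1}^{n} e^{−kλ} (kλ)^{n−k}/(n−k)!. -/
open MeasureTheory ProbabilityTheory

lemma poisson_conv (lam : ℝ) (k r : ℕ) :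
    ∑ i ∈ Finset.range (r+1),
      (Real.exp (-(k*lam)) * (k*lam)^i / i.factorial) *
      (lam^(r-i) * Real.exp (-lam) / (r-i).factorial)
    = Real.exp (-(((k:ℝ)+1)*lam)) * (((k:ℝ)+1)*lam)^r / r.factorial := by
  have hexp : Real.exp (-(((k:ℝ)+1)*lam)) = Real.exp (-(k*lam)) * Real.exp (-lam) := by
    rw [← Real.exp_add]; ring_nf
  have hadd : (((k:ℝ)+1)*lam)^r = ∑ i ∈ Finset.range (r+1),
      ((k:ℝ)*lam)^i * lam^(r-i) * (r.choose i) := by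
    have := add_pow ((k:ℝ)*lam) lam r
    rw [← this]; ring_nf
  rw [hexp, hadd, Finset.mul_sum, Finset.sum_div]
  refine Finset.sum_congr rfl fun i hi => ?_
  have hir : i ≤ r := Nat.lt_succ_iff.mp (Finset.mem_range.mp hi)
  have hfact : (i.factorial : ℝ) * ((r-i).factorial : ℝ) * (r.choose i : ℝ) = (r.factorial : ℝ) := by
    have := Nat.choose_mul_factorial_mul_factorial hir
    push_cast [← this]; ring
  have h1 : (0:ℝ) < i.factorial := by positivity
  have h2 : (0:ℝ) < (r-i).factorial := by positivity
  have h3 : (0:ℝ) < r.factorial := by positivity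
  field_simp
  rw [← hfact]
  ring

lemma sum_dist {Ω : Type*} [MeasurableSpace Ω] (P : Measure Ω) [IsProbabilityMeasure P]
    (S : ℕ → Ω → ℕ)
    (hmeas : ∀ i, Measurable (S i))
    (hindep : iIndepFun S P)
    (hident : ∀ i, IdentDistrib (S i) (S 0) P P)
    (lam : ℝ)
    (hμ' : ∀ s : ℕ, (P {ω | S 0 ω = s}).toReal =
      if s = 0 then 0 else lam^(s-1) * Real.exp (-lam) / (s-1).factorial) :
    ∀ k m : ℕ, (P {ω | ∑ j ∈ Finset.range k, S j ω = m}).toReal =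
      if m < k then 0 else Real.exp (-(k*lam)) * ((k:ℝ)*lam)^(m-k) / (m-k).factorial := by
  intro k
  induction k with
  | zero =>
    intro m
    rcases Nat.eq_zero_or_pos m with hm | hm
    · subst hm
      simp [Set.setOf_true]
    · have : {ω : Ω | ∑ j ∈ Finset.range 0, S j ω = m} = ∅ := by
        ext ω; simp; omega
      rw [this]
      simp only [measure_empty, ENNReal.toReal_zero]
      rw [if_neg (by omega)]
      rw [Nat.cast_zero, zero_mul, neg_zero, Real.exp_zero, zero_pow (by omega), one_mul]
      simp
  | succ k IH =>
    intro m
    -- set decomposition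
    have hset : {ω : Ω | ∑ j ∈ Finset.range (k+1), S j ω = m}
        = ⋃ a ∈ Finset.range (m+1),
            ({ω | ∑ j ∈ Finset.range k, S j ω = a} ∩ {ω | S k ω = m - a}) := by
      ext ω
      simp only [Set.mem_setOf_eq, Set.mem_iUnion, Set.mem_inter_iff, Finset.mem_range,
        Finset.sum_range_succ]
      constructor
      · rintro h
        exact ⟨∑ j ∈ Finset.range k, S j ω, by omega, rfl, by omega⟩
      · rintro ⟨a, ha, h1, h2⟩
        omega
    have hAmeas : ∀ (j a : ℕ), MeasurableSet {ω : Ω | ∑ i ∈ Finset.range j, S i ω = a} := by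
      intro j a
      exact (Finset.measurable_sum (Finset.range j) (fun i _ => hmeas i))
        (MeasurableSet.singleton a)
    have hBmeas : ∀ a : ℕ, MeasurableSet {ω : Ω | S k ω = a} :=
      fun a => hmeas k (MeasurableSet.singleton a)
    have hdisj : (↑(Finset.range (m+1)) : Set ℕ).PairwiseDisjoint
        (fun a => ({ω : Ω | ∑ j ∈ Finset.range k, S j ω = a} ∩ {ω | S k ω = m - a})) := by
      intro a _ b _ hab
      refine Set.disjoint_left.mpr ?_
      rintro ω ⟨h1, _⟩ ⟨h2, _⟩
      exact hab (h1.symm.trans h2)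
    have hmeasure : P {ω : Ω | ∑ j ∈ Finset.range (k+1), S j ω = m}
        = ∑ a ∈ Finset.range (m+1),
            P ({ω | ∑ j ∈ Finset.range k, S j ω = a} ∩ {ω | S k ω = m - a}) := by
      rw [hset]
      exact measure_biUnion_finset hdisj (fun a _ => (hAmeas k a).inter (hBmeas (m - a)))
    -- independence
    have hindepkk : IndepFun (∑ j ∈ Finset.range k, S j) (S k) P :=
      hindep.indepFun_sum_range_succ hmeas k
    have hprod : ∀ a : ℕ,
        P ({ω | ∑ j ∈ Finset.range k, S j ω = a} ∩ {ω | S k ω = m - a})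
        = P {ω | ∑ j ∈ Finset.range k, S j ω = a} * P {ω | S k ω = m - a} := by
      intro a
      have h1 : {ω : Ω | ∑ j ∈ Finset.range k, S j ω = a}
          = (∑ j ∈ Finset.range k, S j) ⁻¹' {a} := by
        ext ω; simp [Finset.sum_apply]
      have h2 : {ω : Ω | S k ω = m - a} = (S k) ⁻¹' {m - a} := by
        ext ω; simp
      rw [h1, h2]
      exact hindepkk.measure_inter_preimage_eq_mul {a} {m-a}
        (MeasurableSet.singleton a) (MeasurableSet.singleton (m-a))
    have hidentk : ∀ s : ℕ, (P {ω | S k ω = s}).toReal = (P {ω | S 0 ω = s}).toReal := by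
      intro s
      have h1 : {ω : Ω | S k ω = s} = (S k) ⁻¹' {s} := by ext ω; simp
      have h2 : {ω : Ω | S 0 ω = s} = (S 0) ⁻¹' {s} := by ext ω; simp
      rw [h1, h2, (hident k).measure_mem_eq (MeasurableSet.singleton s)]
    -- to reals
    have htoReal : (P {ω : Ω | ∑ j ∈ Finset.range (k+1), S j ω = m}).toReal
        = ∑ a ∈ Finset.range (m+1),
            (P {ω | ∑ j ∈ Finset.range k, S j ω = a}).toReal
              * (P {ω | S 0 ω = m - a}).toReal := by
      rw [hmeasure, ENNReal.toReal_sum (fun a _ => measure_ne_top P _)]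
      refine Finset.sum_congr rfl fun a _ => ?_
      rw [hprod a, ENNReal.toReal_mul, hidentk (m - a)]
    rw [htoReal]
    rcases lt_or_ge m (k+1) with hmk | hmk
    · rw [if_pos hmk]
      refine Finset.sum_eq_zero fun a ha => ?_
      have ha' : a ≤ m := Nat.lt_succ_iff.mp (Finset.mem_range.mp ha)
      rcases lt_or_ge a k with hak | hak
      · rw [IH a, if_pos hak, zero_mul]
      · have : a = m ∧ m = k := by omega
        rw [hμ' (m - a), if_pos (by omega), mul_zero]
    · rw [if_neg (by omega)]
      set r := m - (k+1) with hr
      have hsub : ∑ a ∈ Finset.range (m+1),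
            (P {ω | ∑ j ∈ Finset.range k, S j ω = a}).toReal
              * (P {ω | S 0 ω = m - a}).toReal
          = ∑ a ∈ Finset.Ico k m,
            (P {ω | ∑ j ∈ Finset.range k, S j ω = a}).toReal
              * (P {ω | S 0 ω = m - a}).toReal := by
        refine (Finset.sum_subset ?_ ?_).symm
        · intro a ha
          simp only [Finset.mem_Ico] at ha
          simp only [Finset.mem_range]; omega
        · intro a ha ha'
          simp only [Finset.mem_range] at ha
          simp only [Finset.mem_Ico, not_and, not_lt] at ha'
          rcases lt_or_ge a k with hak | hak
          · rw [IH a, if_pos hak, zero_mul]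
          · have ham : m ≤ a := ha' hak
            rw [hμ' (m - a), if_pos (by omega), mul_zero]
      rw [hsub, Finset.sum_Ico_eq_sum_range]
      have hmk' : m - k = r + 1 := by omega
      rw [hmk']
      have hterm : ∀ i ∈ Finset.range (r+1),
          (P {ω | ∑ j ∈ Finset.range k, S j ω = k + i}).toReal
              * (P {ω | S 0 ω = m - (k + i)}).toReal
          = (Real.exp (-(k*lam)) * ((k:ℝ)*lam)^i / i.factorial) *
            (lam^(r-i) * Real.exp (-lam) / (r-i).factorial) := by
        intro i hi
        have hir : i ≤ r := Nat.lt_succ_iff.mp (Finset.mem_range.mp hi)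
        rw [IH (k+i), if_neg (by omega), hμ' (m - (k+i)), if_neg (by omega)]
        have e1 : k + i - k = i := by omega
        have e2 : m - (k+i) - 1 = r - i := by omega
        rw [e1, e2]
      rw [Finset.sum_congr rfl hterm, poisson_conv lam k r]
      push_cast
      ring_nf

/-- If cluster sizes are shifted Poisson,
`μ_k = λ^{k−1} e^{−λ}/(k−1)!` for `k ≥ 1` with `λ > 0`, then for every `n ≥ 1`,
`P[E_n] = ∑_{k=1}^n e^{−kλ} (kλ)^{n−k}/(n−k)!`. -/
theorem esc_poisson_prob_event
    {Ω : Type*} [MeasurableSpace Ω] (P : Measure Ω) [IsProbabilityMeasure P]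
    (S : ℕ → Ω → ℕ)
    (hmeas : ∀ i, Measurable (S i))
    (hindep : iIndepFun S P)
    (hident : ∀ i, IdentDistrib (S i) (S 0) P P)
    (hpos : ∀ i ω, 0 < S i ω)
    (μ : ℕ → ℝ)
    (hμ : ∀ s, μ s = (P {ω | S 0 ω = s}).toReal)
    (E : ℕ → Set Ω)
    (hE : ∀ n, E n = {ω | ∃ K, ∑ j ∈ Finset.range K, S j ω = n})
    (lam : ℝ) (hlam : 0 < lam)
    (hform : ∀ k : ℕ, 1 ≤ k →
      μ k = lam ^ (k - 1) * Real.exp (-lam) / (k - 1).factorial)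
    (n : ℕ) (hn : 1 ≤ n) :
    (P (E n)).toReal
      = ∑ k ∈ Finset.Icc 1 n,
          Real.exp (-(k * lam)) * (k * lam) ^ (n - k) / (n - k).factorial := by
  have hμ' : ∀ s : ℕ, (P {ω | S 0 ω = s}).toReal =
      if s = 0 then 0 else lam^(s-1) * Real.exp (-lam) / (s-1).factorial := by
    intro s
    rcases Nat.eq_zero_or_pos s with hs | hs
    · subst hs
      have : {ω : Ω | S 0 ω = 0} = ∅ := by
        ext ω; simp only [Set.mem_setOf_eq, Set.mem_empty_iff_false, iff_false]
        have := hpos 0 ω; omega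
      rw [this]; simp
    · rw [if_neg (by omega), ← hμ s, hform s hs]
  have key := sum_dist P S hmeas hindep hident lam hμ'
  -- each partial-sum is at least the number of terms
  have hge : ∀ (K : ℕ) (ω : Ω), K ≤ ∑ j ∈ Finset.range K, S j ω := by
    intro K ω
    calc K = ∑ _j ∈ Finset.range K, 1 := by simp
    _ ≤ ∑ j ∈ Finset.range K, S j ω := Finset.sum_le_sum (fun j _ => hpos j ω)
  -- E n as finite disjoint union
  have hEset : E n = ⋃ K ∈ Finset.range (n+1),
      {ω : Ω | ∑ j ∈ Finset.range K, S j ω = n} := by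
    rw [hE n]
    ext ω
    simp only [Set.mem_setOf_eq, Set.mem_iUnion, Finset.mem_range]
    constructor
    · rintro ⟨K, hK⟩
      exact ⟨K, by have := hge K ω; omega, hK⟩
    · rintro ⟨K, _, hK⟩
      exact ⟨K, hK⟩
  have hAmeas : ∀ K : ℕ, MeasurableSet {ω : Ω | ∑ j ∈ Finset.range K, S j ω = n} :=
    fun K => (Finset.measurable_sum (Finset.range K) (fun i _ => hmeas i))
      (MeasurableSet.singleton n)
  have hdisj : (↑(Finset.range (n+1)) : Set ℕ).PairwiseDisjoint
      (fun K => {ω : Ω | ∑ j ∈ Finset.range K, S j ω = n}) := by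
    intro a ha b hb hab
    wlog h : a < b generalizing a b
    · exact (this hb ha hab.symm (by omega)).symm
    refine Set.disjoint_left.mpr ?_
    rintro ω h1 h2
    simp only [Set.mem_setOf_eq] at h1 h2
    have hlt : ∑ j ∈ Finset.range a, S j ω < ∑ j ∈ Finset.range b, S j ω := by
      refine Finset.sum_lt_sum_of_subset (Finset.range_subset_range.mpr (le_of_lt h))
        (i := a) (Finset.mem_range.mpr h) (by simp) (hpos a ω) (fun j _ _ => Nat.zero_le _)
    omega
  have hPE : P (E n) = ∑ K ∈ Finset.range (n+1),
      P {ω : Ω | ∑ j ∈ Finset.range K, S j ω = n} := by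
    rw [hEset]
    exact measure_biUnion_finset hdisj (fun K _ => hAmeas K)
  rw [hPE, ENNReal.toReal_sum (fun K _ => measure_ne_top P _)]
  have hstep : ∀ K ∈ Finset.range (n+1),
      (P {ω : Ω | ∑ j ∈ Finset.range K, S j ω = n}).toReal
      = Real.exp (-(K*lam)) * ((K:ℝ)*lam)^(n-K) / (n-K).factorial := by
    intro K hK
    rw [key K n, if_neg (by simp at hK; omega)]
  rw [Finset.sum_congr rfl hstep]
  refine (Finset.sum_subset ?_ ?_).symm
  · intro K hK
    simp only [Finset.mem_Icc] at hK
    simp only [Finset.mem_range]; omega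
  · intro K hK hK'
    simp only [Finset.mem_range] at hK
    simp only [Finset.mem_Icc, not_and, not_le] at hK'
    have hK0 : K = 0 := by omega
    subst hK0
    rw [Nat.cast_zero, zero_mul, zero_pow (by omega)]
    simp
end

section
/- Suppose the cluster size distribution is a shifted Poisson: μ_k = λ^{k−1} e^{−λ}/(k−1)! for k ≥ 1 and μ_0 = 0, where λ > 0. Then for all integers 1 ≤ k ≤ n, P[K_n = k | E_n] = (e^{−kλ} (kλ)^{n−k}/(n−k)!) / (Σ_{ℓ=1}^{n} e^{−ℓλ} (ℓλ)^{n−ℓ}/(n−ℓ)!). -/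
open MeasureTheory ProbabilityTheory

section EscAux

variable {Ω : Type*} [MeasurableSpace Ω] (P : Measure Ω) [IsProbabilityMeasure P]
  (S : ℕ → Ω → ℕ)

lemma esc_aux_meas (hmeas : ∀ i, Measurable (S i)) (l n : ℕ) :
    MeasurableSet {ω | ∑ j ∈ Finset.range l, S j ω = n} := by
  have h : Measurable fun ω => ∑ j ∈ Finset.range l, S j ω :=
    Finset.measurable_sum _ fun i _ => hmeas i
  exact h (measurableSet_singleton n)

lemma esc_aux_le_sum (hpos : ∀ i ω, 0 < S i ω) (l : ℕ) (ω : Ω) :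
    l ≤ ∑ j ∈ Finset.range l, S j ω := by
  calc l = ∑ _j ∈ Finset.range l, 1 := by simp
  _ ≤ _ := Finset.sum_le_sum fun i _ => hpos i ω

lemma esc_aux_zero (hpos : ∀ i ω, 0 < S i ω) {l n : ℕ} (h : n < l) :
    P {ω | ∑ j ∈ Finset.range l, S j ω = n} = 0 := by
  have he : {ω : Ω | ∑ j ∈ Finset.range l, S j ω = n} = ∅ := by
    ext ω
    simp only [Set.mem_setOf_eq, Set.mem_empty_iff_false, iff_false]
    intro hs
    have := esc_aux_le_sum S hpos l ω
    omega
  rw [he, measure_empty]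

lemma esc_aux_conv (hmeas : ∀ i, Measurable (S i))
    (hindep : iIndepFun S P)
    (hident : ∀ i, IdentDistrib (S i) (S 0) P P) (l n : ℕ) :
    P {ω | ∑ j ∈ Finset.range (l + 1), S j ω = n}
      = ∑ s ∈ Finset.range (n + 1),
          P {ω | ∑ j ∈ Finset.range l, S j ω = n - s} * P {ω | S 0 ω = s} := by
  have hind0 : IndepFun (∑ j ∈ Finset.range l, S j) (S l) P :=
    hindep.indepFun_finsetSum_of_notMem hmeas (by simp)
  have hfun : (∑ j ∈ Finset.range l, S j) = fun ω => ∑ j ∈ Finset.range l, S j ω := by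
    funext ω; exact Finset.sum_apply ω _ _
  have hind : IndepFun (fun ω => ∑ j ∈ Finset.range l, S j ω) (S l) P := hfun ▸ hind0
  have hset : {ω | ∑ j ∈ Finset.range (l + 1), S j ω = n}
      = ⋃ s ∈ Finset.range (n + 1),
          ({ω | ∑ j ∈ Finset.range l, S j ω = n - s} ∩ {ω | S l ω = s}) := by
    ext ω
    simp only [Set.mem_setOf_eq, Set.mem_iUnion, Set.mem_inter_iff, Finset.mem_range,
      Finset.sum_range_succ, exists_prop]
    constructor
    · intro h
      exact ⟨S l ω, by omega, by omega, rfl⟩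
    · rintro ⟨s, hs, h1, rfl⟩
      omega
  rw [hset, measure_biUnion_finset]
  · refine Finset.sum_congr rfl fun s _ => ?_
    have h1 : {ω : Ω | ∑ j ∈ Finset.range l, S j ω = n - s}
        = (fun ω => ∑ j ∈ Finset.range l, S j ω) ⁻¹' {n - s} := rfl
    have h2 : {ω : Ω | S l ω = s} = S l ⁻¹' {s} := rfl
    rw [h1, h2, hind.measure_inter_preimage_eq_mul _ _ (measurableSet_singleton _)
      (measurableSet_singleton _)]
    congr 1
    exact (hident l).measure_mem_eq (measurableSet_singleton s)
  · intro a _ b _ hab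
    simp only [Function.onFun]
    rw [Set.disjoint_left]
    rintro ω ⟨_, h1⟩ ⟨_, h2⟩
    simp only [Set.mem_setOf_eq] at h1 h2
    exact hab (h1 ▸ h2 ▸ rfl)
  · intro b _
    exact (esc_aux_meas S hmeas l _).inter ((hmeas l) (measurableSet_singleton b))

lemma esc_aux_binom (lam : ℝ) (l m : ℕ) :
    ∑ j ∈ Finset.range (m + 1),
        Real.exp (-((l : ℝ) * lam)) * ((l : ℝ) * lam) ^ (m - j) / (m - j).factorial *
          (lam ^ j * Real.exp (-lam) / j.factorial)
      = Real.exp (-(((l : ℝ) + 1) * lam)) * (((l : ℝ) + 1) * lam) ^ m / m.factorial := by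
  have key : ∀ j ∈ Finset.range (m + 1),
      Real.exp (-((l : ℝ) * lam)) * ((l : ℝ) * lam) ^ (m - j) / (m - j).factorial *
          (lam ^ j * Real.exp (-lam) / j.factorial)
        = (Real.exp (-((l : ℝ) * lam)) * Real.exp (-lam) * lam ^ m / m.factorial)
            * ((l : ℝ) ^ (m - j) * (m.choose j)) := by
    intro j hj
    have hjm : j ≤ m := by
      have := Finset.mem_range.mp hj; omega
    have hfac : ((m.choose j : ℝ)) * (j.factorial : ℝ) * ((m - j).factorial : ℝ)
        = (m.factorial : ℝ) := by
      exact_mod_cast congrArg (Nat.cast (R := ℝ)) (Nat.choose_mul_factorial_mul_factorial hjm)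
    have hpow : lam ^ (m - j) * lam ^ j = lam ^ m := by
      rw [← pow_add]; congr 1; omega
    have h1 : ((m - j).factorial : ℝ) ≠ 0 := Nat.cast_ne_zero.mpr (Nat.factorial_ne_zero _)
    have h2 : ((j.factorial : ℕ) : ℝ) ≠ 0 := Nat.cast_ne_zero.mpr (Nat.factorial_ne_zero _)
    have h3 : ((m.factorial : ℕ) : ℝ) ≠ 0 := Nat.cast_ne_zero.mpr (Nat.factorial_ne_zero _)
    rw [mul_pow]
    field_simp
    linear_combination ((l:ℝ)^(m-j) * (m.factorial : ℝ)) * hpow - ((l:ℝ)^(m-j) * lam ^ m) * hfac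
  rw [Finset.sum_congr rfl key, ← Finset.mul_sum]
  have hrefl : ∑ j ∈ Finset.range (m + 1), (l : ℝ) ^ j * (m.choose j : ℝ)
      = ∑ j ∈ Finset.range (m + 1), (l : ℝ) ^ (m - j) * (m.choose j : ℝ) := by
    rw [← Finset.sum_range_reflect (fun j => (l : ℝ) ^ (m - j) * (m.choose j : ℝ)) (m + 1)]
    refine Finset.sum_congr rfl fun j hj => ?_
    have hjm : j ≤ m := by have := Finset.mem_range.mp hj; omega
    rw [show m + 1 - 1 - j = m - j from by omega, show m - (m - j) = j from by omega,
      Nat.choose_symm hjm]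
  have hbin : ∑ j ∈ Finset.range (m + 1), (l : ℝ) ^ (m - j) * (m.choose j : ℝ)
      = ((l : ℝ) + 1) ^ m := by
    rw [← hrefl, add_pow]
    refine Finset.sum_congr rfl fun j _ => ?_
    rw [one_pow, mul_one]
  rw [hbin]
  rw [show -(((l : ℝ) + 1) * lam) = -((l : ℝ) * lam) + -lam by ring, Real.exp_add, mul_pow]
  ring

lemma esc_aux_formula (hmeas : ∀ i, Measurable (S i))
    (hindep : iIndepFun S P)
    (hident : ∀ i, IdentDistrib (S i) (S 0) P P)
    (hpos : ∀ i ω, 0 < S i ω)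
    (lam : ℝ)
    (hform : ∀ s : ℕ, 1 ≤ s → (P {ω | S 0 ω = s}).toReal
      = lam ^ (s - 1) * Real.exp (-lam) / (s - 1).factorial) :
    ∀ l, 1 ≤ l → ∀ n, l ≤ n →
      (P {ω | ∑ j ∈ Finset.range l, S j ω = n}).toReal
        = Real.exp (-((l : ℝ) * lam)) * ((l : ℝ) * lam) ^ (n - l) / (n - l).factorial := by
  intro l hl
  induction l, hl using Nat.le_induction with
  | base =>
    intro n hn
    have hs : {ω : Ω | ∑ j ∈ Finset.range 1, S j ω = n} = {ω | S 0 ω = n} := by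
      simp [Finset.sum_range_one]
    rw [hs, hform n hn]
    norm_num
    ring
  | succ l hl ih =>
    intro n hn
    obtain ⟨m, rfl⟩ : ∃ m, n = l + 1 + m := ⟨n - (l + 1), by omega⟩
    rw [esc_aux_conv P S hmeas hindep hident]
    rw [ENNReal.toReal_sum (fun s _ => ENNReal.mul_ne_top (measure_ne_top P _)
      (measure_ne_top P _))]
    have hzero0 : (P {ω | ∑ j ∈ Finset.range l, S j ω = l + 1 + m - 0}).toReal
        * (P {ω | S 0 ω = 0}).toReal = 0 := by
      have : {ω : Ω | S 0 ω = 0} = ∅ := by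
        ext ω; simp only [Set.mem_setOf_eq, Set.mem_empty_iff_false, iff_false]
        exact (hpos 0 ω).ne'
      rw [this]; simp
    have hsub : ∑ s ∈ Finset.range (l + 1 + m + 1),
          (P {ω | ∑ j ∈ Finset.range l, S j ω = l + 1 + m - s} * P {ω | S 0 ω = s}).toReal
        = ∑ s ∈ Finset.range (m + 2),
          (P {ω | ∑ j ∈ Finset.range l, S j ω = l + 1 + m - s} * P {ω | S 0 ω = s}).toReal := by
      symm
      refine Finset.sum_subset (Finset.range_subset_range.mpr (by omega)) ?_
      intro s _ hs2
      have hs2' : m + 2 ≤ s := by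
        by_contra h; exact hs2 (Finset.mem_range.mpr (by omega))
      have : P {ω | ∑ j ∈ Finset.range l, S j ω = l + 1 + m - s} = 0 :=
        esc_aux_zero P S hpos (by omega)
      rw [this]; simp
    rw [hsub]
    rw [Finset.sum_range_succ' _ (m + 1)]
    simp only [ENNReal.toReal_mul]
    rw [hzero0, add_zero]
    have hterm : ∀ j ∈ Finset.range (m + 1),
        (P {ω | ∑ j' ∈ Finset.range l, S j' ω = l + 1 + m - (j + 1)}).toReal
            * (P {ω | S 0 ω = j + 1}).toReal
          = Real.exp (-((l : ℝ) * lam)) * ((l : ℝ) * lam) ^ (m - j) / (m - j).factorial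
            * (lam ^ j * Real.exp (-lam) / j.factorial) := by
      intro j hj
      have hjm : j ≤ m := by have := Finset.mem_range.mp hj; omega
      have e1 : l + 1 + m - (j + 1) = l + (m - j) := by omega
      rw [e1, ih (l + (m - j)) (by omega), hform (j + 1) (by omega)]
      have e2 : l + (m - j) - l = m - j := by omega
      have e3 : j + 1 - 1 = j := by omega
      rw [e2, e3]
    rw [Finset.sum_congr rfl hterm, esc_aux_binom lam l m]
    have e4 : l + 1 + m - (l + 1) = m := by omega
    rw [e4]
    push_cast
    ring

end EscAux

/-- If cluster sizes are shifted Poisson,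
`μ_k = λ^{k−1} e^{−λ}/(k−1)!` for `k ≥ 1` with `λ > 0`, then for all `1 ≤ k ≤ n`,
`P[K_n = k | E_n] = (e^{−kλ}(kλ)^{n−k}/(n−k)!) / (∑_{ℓ=1}^n e^{−ℓλ}(ℓλ)^{n−ℓ}/(n−ℓ)!)`. -/
theorem esc_poisson_number_of_clusters
    {Ω : Type*} [MeasurableSpace Ω] (P : Measure Ω) [IsProbabilityMeasure P]
    (S : ℕ → Ω → ℕ)
    (hmeas : ∀ i, Measurable (S i))
    (hindep : iIndepFun S P)
    (hident : ∀ i, IdentDistrib (S i) (S 0) P P)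
    (hpos : ∀ i ω, 0 < S i ω)
    (μ : ℕ → ℝ)
    (hμ : ∀ s, μ s = (P {ω | S 0 ω = s}).toReal)
    (E : ℕ → Set Ω)
    (hE : ∀ n, E n = {ω | ∃ K, ∑ j ∈ Finset.range K, S j ω = n})
    (lam : ℝ) (hlam : 0 < lam)
    (hform : ∀ k : ℕ, 1 ≤ k →
      μ k = lam ^ (k - 1) * Real.exp (-lam) / (k - 1).factorial)
    (n k : ℕ) (hk : 1 ≤ k) (hkn : k ≤ n) :
    (ProbabilityTheory.cond P (E n) {ω | ∑ j ∈ Finset.range k, S j ω = n}).toReal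
      = (Real.exp (-(k * lam)) * (k * lam) ^ (n - k) / (n - k).factorial) /
          ∑ l ∈ Finset.Icc 1 n,
            Real.exp (-(l * lam)) * (l * lam) ^ (n - l) / (n - l).factorial := by
  classical
  have hform' : ∀ s : ℕ, 1 ≤ s → (P {ω | S 0 ω = s}).toReal
      = lam ^ (s - 1) * Real.exp (-lam) / (s - 1).factorial := by
    intro s hs; rw [← hμ s]; exact hform s hs
  set A : ℕ → Set Ω := fun l => {ω | ∑ j ∈ Finset.range l, S j ω = n} with hA
  have hformula : ∀ l, 1 ≤ l → l ≤ n →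
      (P (A l)).toReal = Real.exp (-((l : ℝ) * lam)) * ((l : ℝ) * lam) ^ (n - l)
        / (n - l).factorial :=
    fun l h1 h2 => esc_aux_formula P S hmeas hindep hident hpos lam hform' l h1 n h2
  have hAmeas : ∀ l, MeasurableSet (A l) := fun l => esc_aux_meas S hmeas l n
  have hkey : ∀ a b : ℕ, a < b → Disjoint (A a) (A b) := by
    intro a b hab
    rw [Set.disjoint_left]
    intro ω ha hb
    have h1 : ∑ j ∈ Finset.range a, S j ω = n := ha
    have h2 : ∑ j ∈ Finset.range b, S j ω = n := hb
    have h3 : ∑ j ∈ Finset.range a, S j ω + ∑ j ∈ Finset.Ico a b, S j ω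
        = ∑ j ∈ Finset.range b, S j ω := Finset.sum_range_add_sum_Ico _ hab.le
    have h4 : 0 < ∑ j ∈ Finset.Ico a b, S j ω :=
      Finset.sum_pos (fun i _ => hpos i ω) ⟨a, Finset.mem_Ico.mpr ⟨le_refl a, hab⟩⟩
    omega
  have hdisj : (↑(Finset.Icc 1 n) : Set ℕ).PairwiseDisjoint A := by
    intro a _ b _ hab
    rcases lt_or_gt_of_ne hab with h | h
    · exact hkey a b h
    · exact (hkey b a h).symm
  have hEeq : E n = ⋃ l ∈ Finset.Icc 1 n, A l := by
    rw [hE n]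
    ext ω
    simp only [Set.mem_setOf_eq, Set.mem_iUnion, Finset.mem_Icc, exists_prop]
    constructor
    · rintro ⟨K, hK⟩
      refine ⟨K, ⟨?_, ?_⟩, hK⟩
      · rcases Nat.eq_zero_or_pos K with h | h
        · subst h; simp at hK; omega
        · exact h
      · have := esc_aux_le_sum S hpos K ω
        omega
    · rintro ⟨l, _, hl⟩
      exact ⟨l, hl⟩
  have hPE : P (E n) = ∑ l ∈ Finset.Icc 1 n, P (A l) := by
    rw [hEeq]
    exact measure_biUnion_finset hdisj fun l _ => hAmeas l
  have hmeasE : MeasurableSet (E n) := by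
    rw [hEeq]; exact Finset.measurableSet_biUnion _ fun l _ => hAmeas l
  have hsub : A k ⊆ E n := by
    rw [hEeq]
    exact Set.subset_biUnion_of_mem (Finset.mem_Icc.mpr ⟨hk, hkn⟩)
  have hgoalset : {ω : Ω | ∑ j ∈ Finset.range k, S j ω = n} = A k := rfl
  rw [hgoalset, cond_apply hmeasE, Set.inter_eq_self_of_subset_right hsub,
    ENNReal.toReal_mul, ENNReal.toReal_inv, hPE,
    ENNReal.toReal_sum (fun l _ => measure_ne_top P _)]
  rw [div_eq_inv_mul]
  congr 1
  · congr 1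
    refine Finset.sum_congr rfl fun l hl => ?_
    obtain ⟨h1, h2⟩ := Finset.mem_Icc.mp hl
    exact hformula l h1 h2
  · exact hformula k hk hkn
end

section
/- Suppose the cluster size distribution is a shifted negative binomial: μ_k = C(k+r−2, k−1) (1−p)^r p^{k−1} for k ≥ 1 and μ_0 = 0, where p ∈ (0,1), r > 0 is real, and C(t, m) = (t)_m / m! with (t)_m = t(t−1)⋯(t−m+1) the falling factorial. Then for all integers 1 ≤ k ≤ n, P[K_n = k | E_n] = p^{n−k} (1−p)^{rk} C(n + k(r−1) − 1, n−k) / P[E_n]. -/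
open MeasureTheory ProbabilityTheory

/-- Generalized binomial coefficient `C(t, m) = t(t−1)⋯(t−m+1)/m!` for real `t`
and natural `m`. -/
noncomputable def genChoose (t : ℝ) (m : ℕ) : ℝ :=
  (∏ i ∈ Finset.range m, (t - i)) / m.factorial

lemma descPoch_smeval (t : ℝ) (m : ℕ) :
    (descPochhammer ℤ m).smeval t = ∏ i ∈ Finset.range m, (t - i) := by
  induction m with
  | zero => simp [descPochhammer_zero, Polynomial.smeval_one]
  | succ m ih =>
      rw [descPochhammer_succ_right, Polynomial.smeval_mul, ih, Finset.prod_range_succ]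
      congr 1
      simp [Polynomial.smeval_sub, Polynomial.smeval_X, Polynomial.smeval_natCast]

lemma genChoose_eq_choose (t : ℝ) (m : ℕ) : genChoose t m = Ring.choose t m := by
  have h := Ring.descPochhammer_eq_factorial_smul_choose t m
  rw [descPoch_smeval] at h
  rw [genChoose, h, nsmul_eq_mul]
  field_simp

lemma genChoose_vandermonde (x y : ℝ) (m : ℕ) :
    genChoose (x + y) m = ∑ ij ∈ Finset.HasAntidiagonal.antidiagonal m, genChoose x ij.1 * genChoose y ij.2 := by
  simp only [genChoose_eq_choose]
  exact Ring.add_choose_eq m (Commute.all x y)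

lemma genChoose_reflect (x : ℝ) (m : ℕ) :
    genChoose ((m : ℝ) + x - 1) m = (-1) ^ m * genChoose (-x) m := by
  unfold genChoose
  rw [← mul_div_assoc]
  congr 1
  have h1 : ∏ i ∈ Finset.range m, ((m : ℝ) + x - 1 - i)
      = ∏ i ∈ Finset.range m, (x + i) := by
    rw [← Finset.prod_range_reflect (fun j => x + j) m]
    refine Finset.prod_congr rfl fun i hi => ?_
    have hi' : i < m := Finset.mem_range.mp hi
    have : ((m - 1 - i : ℕ) : ℝ) = (m : ℝ) - 1 - i := by
      have h1 : i ≤ m - 1 := Nat.le_sub_one_of_lt hi'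
      have h2 : 1 ≤ m := Nat.one_le_of_lt (Nat.lt_of_le_of_lt (Nat.zero_le i) hi')
      push_cast [Nat.cast_sub h1, Nat.cast_sub h2]
      ring
    rw [this]; ring
  rw [h1]
  have h2 : ∏ i ∈ Finset.range m, (-x - (i : ℝ))
      = ∏ i ∈ Finset.range m, ((-1) * (x + i)) := by
    refine Finset.prod_congr rfl fun i _ => by ring
  rw [h2, Finset.prod_mul_distrib, Finset.prod_const, Finset.card_range, ← mul_assoc,
    ← pow_add, ← two_mul, pow_mul, neg_one_sq, one_pow, one_mul]

lemma genChoose_conv (x y : ℝ) (m : ℕ) :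
    ∑ i ∈ Finset.range (m + 1),
      genChoose ((i : ℝ) + x - 1) i * genChoose (((m - i : ℕ) : ℝ) + y - 1) (m - i)
      = genChoose ((m : ℝ) + (x + y) - 1) m := by
  rw [genChoose_reflect (x + y) m]
  have : (-(x + y)) = (-x) + (-y) := by ring
  rw [this, genChoose_vandermonde, Finset.Nat.sum_antidiagonal_eq_sum_range_succ_mk,
    Finset.mul_sum]
  refine Finset.sum_congr rfl fun i hi => ?_
  have hi' : i ≤ m := Nat.lt_succ_iff.mp (Finset.mem_range.mp hi)
  rw [genChoose_reflect x i, genChoose_reflect y (m - i)]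
  have : ((-1 : ℝ)) ^ i * ((-1) ^ (m - i)) = (-1) ^ m := by
    rw [← pow_add, Nat.add_sub_cancel' hi']
  ring_nf
  rw [← this]; ring

lemma indep_sum_toReal {Ω : Type*} [MeasurableSpace Ω] (P : Measure Ω) [IsProbabilityMeasure P]
    (X Y : Ω → ℕ) (hX : Measurable X) (hY : Measurable Y) (h : IndepFun X Y P) (n : ℕ) :
    (P {ω | X ω + Y ω = n}).toReal
      = ∑ i ∈ Finset.range (n + 1),
          (P {ω | X ω = i}).toReal * (P {ω | Y ω = n - i}).toReal := by
  have hset : {ω | X ω + Y ω = n}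
      = ⋃ i ∈ Finset.range (n + 1), (X ⁻¹' {i} ∩ Y ⁻¹' {n - i}) := by
    ext ω
    simp only [Set.mem_setOf_eq, Set.mem_iUnion, Finset.mem_range, Set.mem_inter_iff,
      Set.mem_preimage, Set.mem_singleton_iff]
    constructor
    · rintro hsum
      exact ⟨X ω, by omega, rfl, by omega⟩
    · rintro ⟨i, hi, h1, h2⟩
      omega
  have hdisj : (Finset.range (n + 1) : Set ℕ).PairwiseDisjoint
      (fun i => X ⁻¹' {i} ∩ Y ⁻¹' {n - i}) := by
    intro a _ b _ hab
    refine Set.disjoint_left.mpr fun ω hωa hωb => ?_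
    exact hab (hωa.1.symm.trans hωb.1)
  rw [hset, measure_biUnion_finset hdisj
    (fun i _ => (hX (measurableSet_singleton i)).inter (hY (measurableSet_singleton (n - i))))]
  rw [ENNReal.toReal_sum (fun i _ => by
    exact ne_of_lt (lt_of_le_of_lt (measure_mono Set.inter_subset_left) (measure_lt_top P _)))]
  refine Finset.sum_congr rfl fun i _ => ?_
  rw [h.measure_inter_preimage_eq_mul _ _ (measurableSet_singleton i)
      (measurableSet_singleton (n - i)), ENNReal.toReal_mul]
  rfl

lemma step_sum (p r : ℝ) (μ : ℕ → ℝ) (hμ0 : μ 0 = 0)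
    (hform : ∀ b : ℕ, 1 ≤ b →
      μ b = genChoose ((b : ℝ) + r - 2) (b - 1) * (1 - p) ^ r * p ^ (b - 1))
    (k n : ℕ) :
    (∑ i ∈ Finset.range (n + 1),
      (if k ≤ i then p ^ (i - k) * ((1 - p) ^ r) ^ k *
          genChoose ((i : ℝ) + k * (r - 1) - 1) (i - k) else 0) * μ (n - i))
    = if k + 1 ≤ n then p ^ (n - (k + 1)) * ((1 - p) ^ r) ^ (k + 1) *
        genChoose ((n : ℝ) + (k + 1) * (r - 1) - 1) (n - (k + 1)) else 0 := by
  by_cases hn : k + 1 ≤ n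
  · rw [if_pos hn]
    set c : ℝ := (1 - p) ^ r with hc
    set m : ℕ := n - (k + 1) with hm
    have hsub : Finset.Ico k n ⊆ Finset.range (n + 1) := by
      intro i hi; simp only [Finset.mem_Ico, Finset.mem_range] at *; omega
    rw [← Finset.sum_subset hsub ?hzero]
    case hzero =>
      intro i hi hni
      simp only [Finset.mem_range, Finset.mem_Ico, not_and, not_lt] at hi hni
      by_cases hik : k ≤ i
      · have : i = n := by omega
        subst this
        simp [hμ0]
      · rw [if_neg hik, zero_mul]
    rw [Finset.sum_Ico_eq_sum_range]
    have hnk : n - k = m + 1 := by omega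
    rw [hnk]
    have hterm : ∀ j ∈ Finset.range (m + 1),
        (if k ≤ k + j then p ^ (k + j - k) * c ^ k *
            genChoose ((↑(k + j) : ℝ) + k * (r - 1) - 1) (k + j - k) else 0) * μ (n - (k + j))
        = (p ^ m * c ^ (k + 1)) *
          (genChoose ((j : ℝ) + (k * r) - 1) j *
            genChoose (((m - j : ℕ) : ℝ) + r - 1) (m - j)) := by
      intro j hj
      have hjm : j ≤ m := by simpa [Nat.lt_succ_iff] using hj
      rw [if_pos (Nat.le_add_right k j), Nat.add_sub_cancel_left]
      have hb : n - (k + j) = (m - j) + 1 := by omega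
      rw [hb, hform ((m - j) + 1) (by omega)]
      have h1 : ((k + j : ℕ) : ℝ) + k * (r - 1) - 1 = (j : ℝ) + k * r - 1 := by
        push_cast; ring
      have h2 : (((m - j) + 1 : ℕ) : ℝ) + r - 2 = ((m - j : ℕ) : ℝ) + r - 1 := by
        push_cast; ring
      rw [h1, h2, Nat.add_sub_cancel]
      have h3 : p ^ j * p ^ (m - j) = p ^ m := by
        rw [← pow_add, Nat.add_sub_cancel' hjm]
      have h4 : c ^ k * c = c ^ (k + 1) := by rw [pow_succ]
      calc p ^ j * c ^ k * genChoose ((j : ℝ) + ↑k * r - 1) j *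
            (genChoose ((↑(m - j) : ℝ) + r - 1) (m - j) * c * p ^ (m - j))
          = (p ^ j * p ^ (m - j)) * (c ^ k * c) *
            (genChoose ((j : ℝ) + ↑k * r - 1) j *
              genChoose ((↑(m - j) : ℝ) + r - 1) (m - j)) := by ring
        _ = _ := by rw [h3, h4]
    rw [Finset.sum_congr rfl hterm, ← Finset.mul_sum, genChoose_conv (k * r) r m]
    have h5 : ((m : ℝ)) + ((k : ℝ) * r + r) - 1 = (n : ℝ) + ((k : ℕ) + 1 : ℕ) * (r - 1) - 1 := by
      have : (n : ℝ) = (m : ℝ) + (k : ℝ) + 1 := by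
        have : n = m + k + 1 := by omega
        rw [this]; push_cast; ring
      rw [this]; push_cast; ring
    rw [h5]
    push_cast
    ring
  · rw [if_neg hn]
    refine Finset.sum_eq_zero fun i hi => ?_
    simp only [Finset.mem_range] at hi
    by_cases hik : k ≤ i
    · have : i = n := by omega
      subst this
      simp [hμ0]
    · rw [if_neg hik, zero_mul]

lemma key_induction
    {Ω : Type*} [MeasurableSpace Ω] (P : Measure Ω) [IsProbabilityMeasure P]
    (S : ℕ → Ω → ℕ)
    (hmeas : ∀ i, Measurable (S i))
    (hindep : iIndepFun S P)
    (hident : ∀ i, IdentDistrib (S i) (S 0) P P)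
    (hpos : ∀ i ω, 0 < S i ω)
    (μ : ℕ → ℝ)
    (hμ : ∀ s, μ s = (P {ω | S 0 ω = s}).toReal)
    (p r : ℝ)
    (hform : ∀ k : ℕ, 1 ≤ k →
      μ k = genChoose ((k : ℝ) + r - 2) (k - 1) * (1 - p) ^ r * p ^ (k - 1)) :
    ∀ k n : ℕ, (P {ω | ∑ j ∈ Finset.range (k + 1), S j ω = n}).toReal
      = if k + 1 ≤ n then p ^ (n - (k + 1)) * ((1 - p) ^ r) ^ (k + 1) *
          genChoose ((n : ℝ) + ((k + 1 : ℕ) : ℝ) * (r - 1) - 1) (n - (k + 1)) else 0 := by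
  have hμ0 : μ 0 = 0 := by
    rw [hμ 0]
    have hempty : {ω | S 0 ω = 0} = ∅ := by
      ext ω
      simp only [Set.mem_setOf_eq, Set.mem_empty_iff_false, iff_false]
      exact (hpos 0 ω).ne'
    rw [hempty, measure_empty, ENNReal.toReal_zero]
  intro k
  induction k with
  | zero =>
      intro n
      have hset : {ω | ∑ j ∈ Finset.range 1, S j ω = n} = {ω | S 0 ω = n} := by
        ext ω; simp [Finset.sum_range_one]
      rw [hset]
      by_cases hn : 1 ≤ n
      · rw [if_pos hn, ← hμ n, hform n hn]
        have h1 : (n : ℝ) + ((0 + 1 : ℕ) : ℝ) * (r - 1) - 1 = (n : ℝ) + r - 2 := by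
          push_cast; ring
        rw [h1]
        norm_num
        ring
      · have hn0 : n = 0 := by omega
        subst hn0
        rw [if_neg hn, ← hμ 0, hμ0]
  | succ k ih =>
      intro n
      have hXmeas : Measurable fun ω => ∑ j ∈ Finset.range (k + 1), S j ω :=
        Finset.measurable_sum _ fun i _ => hmeas i
      have heq : (∑ j ∈ Finset.range (k + 1), S j)
          = fun ω => ∑ j ∈ Finset.range (k + 1), S j ω := by
        ext ω; simp [Finset.sum_apply]
      have hXmeas' : Measurable (∑ j ∈ Finset.range (k + 1), S j) := heq ▸ hXmeas
      have hI : IndepFun (∑ j ∈ Finset.range (k + 1), S j) (S (k + 1)) P :=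
        hindep.indepFun_finsetSum_of_notMem hmeas (by simp)
      have hset : {ω | ∑ j ∈ Finset.range (k + 1 + 1), S j ω = n}
          = {ω | (∑ j ∈ Finset.range (k + 1), S j) ω + S (k + 1) ω = n} := by
        ext ω
        simp [Finset.sum_apply, Finset.sum_range_succ]
      rw [hset, indep_sum_toReal P _ _ hXmeas' (hmeas (k + 1)) hI n]
      have hterm : ∀ i ∈ Finset.range (n + 1),
          (P {ω | (∑ j ∈ Finset.range (k + 1), S j) ω = i}).toReal *
            (P {ω | S (k + 1) ω = n - i}).toReal
          = (if k + 1 ≤ i then p ^ (i - (k + 1)) * ((1 - p) ^ r) ^ (k + 1) *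
              genChoose ((i : ℝ) + ((k + 1 : ℕ) : ℝ) * (r - 1) - 1) (i - (k + 1)) else 0) * μ (n - i) := by
        intro i _
        have e1 : {ω | (∑ j ∈ Finset.range (k + 1), S j) ω = i}
            = {ω | ∑ j ∈ Finset.range (k + 1), S j ω = i} := by
          ext ω; simp [Finset.sum_apply]
        have e2 : (P {ω | S (k + 1) ω = n - i}).toReal = μ (n - i) := by
          rw [hμ (n - i)]
          congr 1
          exact (hident (k + 1)).measure_mem_eq (measurableSet_singleton (n - i))
        rw [e1, ih i, e2]
      rw [Finset.sum_congr rfl hterm, step_sum p r μ hμ0 hform (k + 1) n]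
      simp only [Nat.cast_add, Nat.cast_one]

/-- If cluster sizes are shifted negative binomial,
`μ_k = C(k+r−2, k−1)(1−p)^r p^{k−1}` for `k ≥ 1` with `p ∈ (0,1)` and `r > 0`, then
for all `1 ≤ k ≤ n`,
`P[K_n = k | E_n] = p^{n−k}(1−p)^{rk} C(n + k(r−1) − 1, n−k) / P[E_n]`. -/
theorem esc_nb_number_of_clusters
    {Ω : Type*} [MeasurableSpace Ω] (P : Measure Ω) [IsProbabilityMeasure P]
    (S : ℕ → Ω → ℕ)
    (hmeas : ∀ i, Measurable (S i))
    (hindep : iIndepFun S P)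
    (hident : ∀ i, IdentDistrib (S i) (S 0) P P)
    (hpos : ∀ i ω, 0 < S i ω)
    (μ : ℕ → ℝ)
    (hμ : ∀ s, μ s = (P {ω | S 0 ω = s}).toReal)
    (E : ℕ → Set Ω)
    (hE : ∀ n, E n = {ω | ∃ K, ∑ j ∈ Finset.range K, S j ω = n})
    (p r : ℝ) (hp0 : 0 < p) (hp1 : p < 1) (hr : 0 < r)
    (hform : ∀ k : ℕ, 1 ≤ k →
      μ k = genChoose ((k : ℝ) + r - 2) (k - 1) * (1 - p) ^ r * p ^ (k - 1))
    (n k : ℕ) (hk : 1 ≤ k) (hkn : k ≤ n) :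
    (ProbabilityTheory.cond P (E n) {ω | ∑ j ∈ Finset.range k, S j ω = n}).toReal
      = p ^ (n - k) * (1 - p) ^ (r * k) *
          genChoose ((n : ℝ) + k * (r - 1) - 1) (n - k) / (P (E n)).toReal := by

  have hmeasSum : ∀ K : ℕ, Measurable fun ω => ∑ j ∈ Finset.range K, S j ω :=
    fun K => Finset.measurable_sum _ fun i _ => hmeas i
  have hEmeas : MeasurableSet (E n) := by
    rw [hE n]
    have : {ω : Ω | ∃ K, ∑ j ∈ Finset.range K, S j ω = n}
        = ⋃ K : ℕ, {ω | ∑ j ∈ Finset.range K, S j ω = n} := by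
      ext ω; simp
    rw [this]
    exact MeasurableSet.iUnion fun K => (hmeasSum K) (measurableSet_singleton n)
  have hsub : {ω | ∑ j ∈ Finset.range k, S j ω = n} ⊆ E n := by
    rw [hE n]
    exact fun ω hω => ⟨k, hω⟩
  rw [ProbabilityTheory.cond_apply hEmeas, Set.inter_eq_self_of_subset_right hsub,
    ENNReal.toReal_mul, ENNReal.toReal_inv]
  have hk1 : k - 1 + 1 = k := Nat.succ_pred_eq_of_pos hk
  have hP : (P {ω | ∑ j ∈ Finset.range k, S j ω = n}).toReal
      = p ^ (n - k) * ((1 - p) ^ r) ^ k *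
          genChoose ((n : ℝ) + (k : ℝ) * (r - 1) - 1) (n - k) := by
    have := key_induction P S hmeas hindep hident hpos μ hμ p r hform (k - 1) n
    rw [hk1] at this
    rw [this, if_pos hkn]
  rw [hP]
  have hc : (1 - p) ^ (r * (k : ℝ)) = ((1 - p) ^ r) ^ k := by
    rw [Real.rpow_mul (by linarith), Real.rpow_natCast]
  rw [hc]
  ring
end
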